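/- arXiv:0901.2291 — 4 statements merged into one kernel-verified Lean document; each statement's English description precedes it below -/
import Mathlib

section
/- There is no class C of abelian groups such that for every abelian group G, G is cotorsionfree if and only if Ext(G, X) = 0 for every X ∈ C. That is, the class of cotorsionfree groups is never of the form ⊥C = {G : Ext(G, X) = 0 for all X ∈ C}. -/
/-- An abelian group is cotorsionfree if it has no subgroup isomorphic to `ℚ`,
to `ℤ/pℤ` for a prime `p`, or to the additive group of the `p`-adic integers. -/
def Cotorsionfree (G : Type*) [AddCommGroup G] : Prop :=
  (¬ ∃ H : AddSubgroup G, Nonempty (H ≃+ ℚ)) ∧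
  (∀ p : ℕ, p.Prime → ¬ ∃ H : AddSubgroup G, Nonempty (H ≃+ ZMod p)) ∧
  (∀ (p : ℕ) [Fact p.Prime], ¬ ∃ H : AddSubgroup G, Nonempty (H ≃+ PadicInt p))

/-- `Ext(G, X) = 0`: every short exact sequence `0 → X → E → G → 0` splits, i.e. every
surjective homomorphism `π : E → G` whose kernel is isomorphic to `X` has a
homomorphic right inverse. -/
def ExtVanish (G : Type) [AddCommGroup G] (X : Type) [AddCommGroup X] : Prop :=
  ∀ (E : Type) [AddCommGroup E] (π : E →+ G), Function.Surjective π →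
    Nonempty (π.ker ≃+ X) → ∃ s : G →+ E, π.comp s = AddMonoidHom.id G

namespace S9


lemma int_eq_zero_of_dvd_unbounded (m : ℤ) (h : ∀ N : ℕ, ∃ d : ℕ, N ≤ d ∧ (d:ℤ) ∣ m) : m = 0 := by
  by_contra hm
  obtain ⟨d, hd, hdvd⟩ := h (m.natAbs + 1)
  have habs : (0:ℤ) < |m| := abs_pos.mpr hm
  have hle := Int.le_of_dvd habs ((dvd_abs _ _).mpr hdvd)
  rw [Int.abs_eq_natAbs] at hle
  have : d ≤ m.natAbs := by exact_mod_cast hle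
  omega

lemma homQint_eq_zero (f : ℚ →+ ℤ) : f = 0 := by
  ext x
  simp only [AddMonoidHom.zero_apply]
  refine int_eq_zero_of_dvd_unbounded _ (fun N => ⟨N + 1, le_of_lt (Nat.lt_succ_self N), ?_⟩)
  set n := N + 1
  have hn : (n:ℚ) ≠ 0 := by positivity
  have hx : n • (x / n) = x := by
    rw [nsmul_eq_mul, mul_div_cancel₀ _ hn]
  have hfx : f x = n • f (x / n) := by rw [← map_nsmul, hx]
  exact ⟨f (x / n), by rw [hfx, nsmul_eq_mul]⟩

lemma homZModint_eq_zero (p : ℕ) (hp : 0 < p) (f : ZMod p →+ ℤ) : f = 0 := by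
  ext x
  simp only [AddMonoidHom.zero_apply]
  have h1 : p • x = 0 := by
    haveI : NeZero p := ⟨hp.ne'⟩
    simp [nsmul_eq_mul, ZMod.natCast_self]
  have h2 : (p : ℤ) * f x = 0 := by
    rw [← nsmul_eq_mul, ← map_nsmul, h1, map_zero]
  have hp' : (p : ℤ) ≠ 0 := by exact_mod_cast hp.ne'
  exact (mul_eq_zero.mp h2).resolve_left hp'

lemma homPadicint_eq_zero (p : ℕ) [Fact p.Prime] (f : PadicInt p →+ ℤ) : f = 0 := by
  obtain ⟨q, hqp, hq⟩ := Nat.exists_infinite_primes (p + 1)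
  have hne : p ≠ q := fun h => by omega
  have hu : IsUnit (q : PadicInt p) := by
    rw [PadicInt.isUnit_iff]
    rcases lt_or_eq_of_le (PadicInt.norm_le_one (q : PadicInt p)) with h | h
    · exfalso
      have h1 : ((p:ℤ)) ∣ (q:ℤ) := (PadicInt.norm_int_lt_one_iff_dvd (q:ℤ)).mp (by exact_mod_cast h)
      have h2 : p ∣ q := by exact_mod_cast h1
      exact hne ((Nat.prime_dvd_prime_iff_eq Fact.out hq).mp h2)
    · exact h
  obtain ⟨u, hu⟩ := hu
  ext x
  simp only [AddMonoidHom.zero_apply]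
  refine int_eq_zero_of_dvd_unbounded _ (fun N => ⟨q ^ N, (Nat.lt_pow_self hq.one_lt : N < q ^ N).le, ?_⟩)
  have hx : (q ^ N : ℕ) • (((u⁻¹ ^ N : (PadicInt p)ˣ) : PadicInt p) * x) = x := by
    rw [nsmul_eq_mul]
    push_cast
    rw [← hu]
    rw [← mul_assoc, ← Units.val_pow_eq_pow_val, ← Units.val_pow_eq_pow_val, ← Units.val_mul,
      ← mul_pow, mul_inv_cancel, one_pow, Units.val_one, one_mul]
  have : f x = (q ^ N : ℕ) • f (((u⁻¹ ^ N : (PadicInt p)ˣ) : PadicInt p) * x) := by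
    rw [← map_nsmul, hx]
  exact ⟨f (((u⁻¹ ^ N : (PadicInt p)ˣ) : PadicInt p) * x), by rw [this, nsmul_eq_mul]⟩

/-- Any group admitting an injective hom into a product of copies of `ℤ` is cotorsionfree. -/
lemma cotorsionfree_of_inj_into_intfun {G : Type} [AddCommGroup G] {ι : Type}
    (j : G →+ (ι → ℤ)) (hj : Function.Injective j) : Cotorsionfree G := by
  have key : ∀ (W : Type) [AddCommGroup W], (∀ (g : W →+ ℤ), g = 0) →
      ∀ (k : W →+ G), Function.Injective k → ∀ w : W, w = 0 := by
    intro W _ hW k hk w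
    apply hk
    rw [map_zero]
    have hz : ∀ i : ι, j (k w) i = 0 := by
      intro i
      have := hW (((Pi.evalAddMonoidHom (fun _ : ι => ℤ) i).comp j).comp k)
      have := congrArg (fun g => g w) this
      simpa using this
    apply hj
    rw [map_zero]
    funext i
    exact hz i
  refine ⟨?_, ?_, ?_⟩
  · rintro ⟨H, ⟨e⟩⟩
    have h1 : (1 : ℚ) = 0 := by
      have := key ℚ (homQint_eq_zero) (H.subtype.comp e.symm.toAddMonoidHom)
        (H.subtype_injective.comp e.symm.injective) 1
      exact this
    norm_num at h1
  · rintro p hp ⟨H, ⟨e⟩⟩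
    haveI : Fact (1 < p) := ⟨hp.one_lt⟩
    have h1 : (1 : ZMod p) = 0 := by
      have := key (ZMod p) (homZModint_eq_zero p hp.pos) (H.subtype.comp e.symm.toAddMonoidHom)
        (H.subtype_injective.comp e.symm.injective) 1
      exact this
    exact one_ne_zero h1
  · rintro p hp ⟨H, ⟨e⟩⟩
    have h1 : (1 : PadicInt p) = 0 := by
      have := key (PadicInt p) (homPadicint_eq_zero p) (H.subtype.comp e.symm.toAddMonoidHom)
        (H.subtype_injective.comp e.symm.injective) 1
      exact this
    exact one_ne_zero h1



open Function

section Tree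

variable (ι : Type)

abbrev Br := ℕ → ι
abbrev Tr := List ι

open scoped Classical

variable {ι}

def pre (η : Br ι) (n : ℕ) : Tr ι := (List.range n).map η

lemma pre_length (η : Br ι) (n : ℕ) : (pre η n).length = n := by
  simp [pre]

lemma pre_eq_coord {η η' : Br ι} {n : ℕ} (h : pre η n = pre η' n) {m : ℕ} (hm : m < n) :
    η m = η' m := by
  have h1 : (pre η n)[m]? = some (η m) := by
    simp [pre, List.getElem?_map, List.getElem?_range hm]
  have h2 : (pre η' n)[m]? = some (η' m) := by
    simp [pre, List.getElem?_map, List.getElem?_range hm]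
  rw [h, h2] at h1
  exact (Option.some_injective _ h1).symm

noncomputable def sep (η η' : Br ι) : ℕ :=
  if h : η' = η then 0 else (Function.ne_iff.mp h).choose

lemma sep_spec {η η' : Br ι} (h : η' ≠ η) : η' (sep η η') ≠ η (sep η η') := by
  rw [sep]
  rw [dif_neg h]
  exact (Function.ne_iff.mp h).choose_spec

noncomputable def yb (η : Br ι) (k : ℕ) : Tr ι → ℤ := fun τ =>
  if k ≤ τ.length ∧ τ = pre η τ.length then (Nat.factorial τ.length / Nat.factorial k : ℕ) else 0

lemma yb_apply (η' η : Br ι) (k n : ℕ) :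
    yb η' k (pre η n) = if k ≤ n ∧ pre η n = pre η' n
      then ((Nat.factorial n / Nat.factorial k : ℕ) : ℤ) else 0 := by
  simp only [yb, pre_length]

variable (ι)

abbrev AA := ((Br ι) × ℕ) →₀ ℤ

noncomputable def Phi : AA ι →+ (Tr ι → ℤ) :=
  Finsupp.liftAddHom (fun ηk => (zmultiplesHom _) (yb ηk.1 ηk.2))

noncomputable def q0 : AA ι →+ ((Br ι) →₀ ℚ) :=
  Finsupp.liftAddHom (fun ηk => (zmultiplesHom _) (Finsupp.single ηk.1 (1 / (Nat.factorial ηk.2 : ℚ))))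

variable {ι}

lemma Phi_apply (c : AA ι) (τ : Tr ι) :
    Phi ι c τ = ∑ i ∈ c.support, c i • yb i.1 i.2 τ := by
  rw [Phi, Finsupp.liftAddHom_apply, Finsupp.sum]
  rw [Finset.sum_apply]
  simp [zmultiplesHom_apply]

lemma q0_apply (c : AA ι) (η : Br ι) :
    q0 ι c η = ∑ i ∈ c.support, (c i : ℚ) * (if i.1 = η then 1 / (Nat.factorial i.2 : ℚ) else 0) := by
  classical
  rw [q0, Finsupp.liftAddHom_apply, Finsupp.sum]
  rw [Finsupp.finset_sum_apply]
  refine Finset.sum_congr rfl (fun i _ => ?_)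
  rw [zmultiplesHom_apply, Finsupp.smul_apply, Finsupp.single_apply, zsmul_eq_mul]

noncomputable def NB (c : AA ι) (η : Br ι) : ℕ :=
  (c.support.sup (fun i => i.2 ⊔ (sep η i.1))) + 1

lemma phi_pre (c : AA ι) (η : Br ι) {n : ℕ} (hn : NB c η ≤ n) :
    ((Phi ι c (pre η n) : ℤ) : ℚ) = (Nat.factorial n : ℚ) * ((q0 ι c) η) := by
  classical
  rw [Phi_apply, q0_apply, Finset.mul_sum]
  push_cast
  refine Finset.sum_congr rfl (fun i hi => ?_)
  have hs := Finset.le_sup (f := fun i : (Br ι) × ℕ => i.2 ⊔ (sep η i.1)) hi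
  have hk : i.2 < NB c η := by
    rw [NB]
    exact Nat.lt_succ_of_le (le_trans le_sup_left hs)
  have hsep : sep η i.1 < NB c η := by
    rw [NB]
    exact Nat.lt_succ_of_le (le_trans le_sup_right hs)
  by_cases hb : i.1 = η
  · subst hb
    rw [yb_apply, if_pos ⟨by omega, rfl⟩, if_pos rfl]
    have hdvd : Nat.factorial i.2 ∣ Nat.factorial n := Nat.factorial_dvd_factorial (by omega)
    have hne : (Nat.factorial i.2 : ℚ) ≠ 0 := by
      exact_mod_cast (Nat.factorial_ne_zero _)
    push_cast [Nat.cast_div hdvd hne]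
    rw [smul_eq_mul, Int.cast_mul, Int.cast_div (α := ℚ) (Int.natCast_dvd_natCast.mpr hdvd) (by exact_mod_cast hne)]
    push_cast
    field_simp
  · have hcond : ¬ (i.2 ≤ n ∧ pre η n = pre i.1 n) := by
      rintro ⟨-, heq⟩
      exact sep_spec hb (pre_eq_coord heq (lt_of_lt_of_le hsep hn)).symm
    rw [yb_apply, if_neg hcond, if_neg hb]
    simp

lemma ker_Phi_le_ker_q0 : (Phi ι).ker ≤ (q0 ι).ker := by
  intro c hc
  rw [AddMonoidHom.mem_ker] at hc ⊢
  ext η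
  have h1 := phi_pre c η (le_refl (NB c η))
  rw [hc] at h1
  simp only [Pi.zero_apply, Int.cast_zero] at h1
  have hne : (Nat.factorial (NB c η) : ℚ) ≠ 0 := by exact_mod_cast (Nat.factorial_ne_zero _)
  have := (mul_eq_zero.mp h1.symm).resolve_left hne
  simpa using this

lemma supp_Phi_finite {c : AA ι} (h : q0 ι c = 0) : (Function.support (Phi ι c)).Finite := by
  classical
  refine Set.Finite.subset (Set.Finite.biUnion (c.support.finite_toSet)
    (fun i _ => (Set.finite_Iio (NB c i.1)).image (fun j => pre i.1 j))) ?_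
  intro τ hτ
  rw [Function.mem_support] at hτ
  have hex : ∃ i ∈ c.support, yb i.1 i.2 τ ≠ 0 := by
    by_contra hno
    push_neg at hno
    apply hτ
    rw [Phi_apply]
    refine Finset.sum_eq_zero (fun i hi => ?_)
    rw [hno i hi, smul_zero]
  obtain ⟨i, hi, hyb⟩ := hex
  have hτi : τ = pre i.1 τ.length := by
    simp only [yb] at hyb
    by_contra hne
    rw [if_neg (fun hcond => hne hcond.2)] at hyb
    exact hyb rfl
  have hlen : τ.length < NB c i.1 := by
    by_contra hge
    push_neg at hge
    apply hτ
    have h1 := phi_pre c i.1 hge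
    rw [h, Finsupp.coe_zero, Pi.zero_apply, mul_zero] at h1
    rw [← hτi] at h1
    exact_mod_cast h1
  refine Set.mem_biUnion hi ?_
  exact ⟨τ.length, hlen, hτi.symm⟩

lemma q0_surj : Surjective (q0 ι) := by
  intro qq
  induction qq using Finsupp.induction with
  | zero => exact ⟨0, map_zero _⟩
  | single_add η r f _ _ ih =>
    obtain ⟨c, hc⟩ := ih
    refine ⟨Finsupp.single (η, r.den) (r.num * (Nat.factorial r.den / r.den : ℕ)) + c, ?_⟩
    rw [map_add, hc]
    congr 1
    rw [q0, Finsupp.liftAddHom_apply_single, zmultiplesHom_apply, Finsupp.smul_single]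
    congr 1
    have hdvd : r.den ∣ Nat.factorial r.den := Nat.dvd_factorial r.pos le_rfl
    have hden : (r.den : ℚ) ≠ 0 := by exact_mod_cast r.den_nz
    have hfac : ((Nat.factorial r.den : ℕ) : ℚ) ≠ 0 := by
      exact_mod_cast (Nat.factorial_ne_zero _)
    have hcast : ((Nat.factorial r.den / r.den : ℕ) : ℚ) = (Nat.factorial r.den : ℚ) / r.den :=
      Nat.cast_div hdvd hden
    rw [zsmul_eq_mul, Int.cast_mul, Int.cast_natCast, hcast]
    have hnum : (r.num : ℚ) = r * r.den := by
      rw [Rat.mul_den_eq_num]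
    rw [hnum, eq_comm]
    field_simp

end Tree



open Function

section Ext

variable {B : Type} {X : Type} [AddCommGroup X] {E0 : Type} [AddCommGroup E0]

open scoped Classical

variable (π0 : E0 →+ ℚ)

noncomputable def pih : (B →₀ E0) →+ (B →₀ ℚ) := Finsupp.mapRange.addMonoidHom π0

noncomputable def sig (S : Set B) : (B →₀ E0) →+ E0 :=
  Finsupp.liftAddHom (fun b => if b ∈ S then AddMonoidHom.id E0 else 0)

noncomputable def nuh (S : Set B) : (B →₀ ℚ) →+ ℚ :=
  Finsupp.liftAddHom (fun b => if b ∈ S then AddMonoidHom.id ℚ else 0)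

noncomputable def NN (S : Set B) : AddSubgroup (B →₀ E0) :=
  (pih (B := B) π0).ker ⊓ (sig (E0 := E0) S).ker

noncomputable abbrev Ehat (S : Set B) := (B →₀ E0) ⧸ NN π0 S

noncomputable def piS (S : Set B) : Ehat π0 S →+ (B →₀ ℚ) :=
  QuotientAddGroup.lift (NN π0 S) (pih π0) inf_le_left

noncomputable def hbar (S : Set B) : Ehat π0 S →+ E0 :=
  QuotientAddGroup.lift (NN π0 S) (sig S) inf_le_right

lemma piS_mk (S : Set B) (f : B →₀ E0) :
    piS π0 S (QuotientAddGroup.mk' _ f) = pih π0 f := rfl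

lemma hbar_mk (S : Set B) (f : B →₀ E0) :
    hbar π0 S (QuotientAddGroup.mk' _ f) = sig S f := rfl

lemma pih_single (b : B) (e : E0) :
    pih (B := B) π0 (Finsupp.single b e) = Finsupp.single b (π0 e) := by
  simp [pih, Finsupp.mapRange.addMonoidHom, Finsupp.mapRange_single]

lemma pih_apply (f : B →₀ E0) (b : B) : pih π0 f b = π0 (f b) := by
  simp [pih, Finsupp.mapRange.addMonoidHom, Finsupp.mapRange_apply]

lemma sig_single (S : Set B) (b : B) (e : E0) :
    sig S (Finsupp.single b e) = if b ∈ S then e else 0 := by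
  rw [sig, Finsupp.liftAddHom_apply_single]
  split_ifs <;> simp

lemma nuh_single (S : Set B) (b : B) (r : ℚ) :
    nuh S (Finsupp.single b r) = if b ∈ S then r else 0 := by
  rw [nuh, Finsupp.liftAddHom_apply_single]
  split_ifs <;> simp

lemma pih_surj (h : Surjective π0) : Surjective (pih (B := B) π0) := by
  intro qq
  induction qq using Finsupp.induction with
  | zero => exact ⟨0, map_zero _⟩
  | single_add b r f _ _ ih =>
    obtain ⟨g, hg⟩ := ih
    obtain ⟨e, he⟩ := h r
    exact ⟨Finsupp.single b e + g, by rw [map_add, hg, pih_single, he]⟩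

lemma piS_surj (S : Set B) (h : Surjective π0) : Surjective (piS π0 S) := by
  intro qq
  obtain ⟨f, hf⟩ := pih_surj π0 h qq
  exact ⟨QuotientAddGroup.mk' _ f, by rw [piS_mk, hf]⟩

variable (ε0 : π0.ker ≃+ X)

noncomputable def psi (S : Set B) (hS : S.Nonempty) : X →+ Ehat π0 S :=
  (QuotientAddGroup.mk' _).comp ((Finsupp.singleAddHom hS.some).comp
    (π0.ker.subtype.comp ε0.symm.toAddMonoidHom))

lemma psi_apply (S : Set B) (hS : S.Nonempty) (x : X) :
    psi π0 ε0 S hS x = QuotientAddGroup.mk' _ (Finsupp.single hS.some (↑(ε0.symm x) : E0)) := rfl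

lemma psi_mem_ker (S : Set B) (hS : S.Nonempty) (x : X) :
    psi π0 ε0 S hS x ∈ (piS π0 S).ker := by
  rw [AddMonoidHom.mem_ker, psi_apply, piS_mk, pih_single]
  have : π0 ↑(ε0.symm x) = 0 := (ε0.symm x).2
  rw [this, Finsupp.single_zero]

noncomputable def keq (S : Set B) (hS : S.Nonempty) : X ≃+ ((piS π0 S).ker) := by
  refine AddEquiv.ofBijective ((psi π0 ε0 S hS).codRestrict _ (psi_mem_ker π0 ε0 S hS)) ⟨?_, ?_⟩
  · intro x y hxy
    have h0 : psi π0 ε0 S hS (x - y) = 0 := by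
      rw [map_sub, sub_eq_zero]
      exact congrArg Subtype.val hxy
    rw [psi_apply, QuotientAddGroup.mk'_apply, QuotientAddGroup.eq_zero_iff, NN,
      AddSubgroup.mem_inf] at h0
    · have h2 := h0.2
      rw [AddMonoidHom.mem_ker, sig_single, if_pos hS.some_mem] at h2
      have : ε0.symm (x - y) = 0 := by
        ext
        exact h2
      have := congrArg ε0 this
      rw [AddEquiv.apply_symm_apply, map_zero] at this
      exact sub_eq_zero.mp this
  · rintro ⟨y, hy⟩
    obtain ⟨f, rfl⟩ := QuotientAddGroup.mk'_surjective (NN π0 S) y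
    rw [AddMonoidHom.mem_ker, piS_mk] at hy
    have hb : ∀ b : B, π0 (f b) = 0 := by
      intro b
      have := congrArg (fun g => g b) hy
      simpa [pih_apply] using this
    have hmem : sig S f ∈ π0.ker := by
      rw [AddMonoidHom.mem_ker, sig, Finsupp.liftAddHom_apply]
      rw [map_finsuppSum]
      refine Finset.sum_eq_zero (fun b _ => ?_)
      by_cases hbS : b ∈ S <;> simp [hbS, hb b]
    refine ⟨ε0 ⟨sig S f, hmem⟩, ?_⟩
    ext
    simp only [AddMonoidHom.codRestrict_apply]
    rw [psi_apply]
    rw [AddEquiv.symm_apply_apply]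
    rw [QuotientAddGroup.mk'_apply, QuotientAddGroup.mk'_apply]
    refine QuotientAddGroup.eq_iff_sub_mem.mpr ?_
    rw [NN, AddSubgroup.mem_inf]
    constructor
    · rw [AddMonoidHom.mem_ker, map_sub, pih_single]
      have := hmem
      rw [AddMonoidHom.mem_ker] at this
      rw [this, Finsupp.single_zero, zero_sub, neg_eq_zero]
      ext b
      rw [pih_apply, hb b]
      rfl
    · rw [AddMonoidHom.mem_ker, map_sub, sig_single, if_pos hS.some_mem, sub_self]

lemma keq_coe (S : Set B) (hS : S.Nonempty) (x : X) :
    ((keq π0 ε0 S hS x : (piS π0 S).ker) : Ehat π0 S) = psi π0 ε0 S hS x := rfl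

lemma hbar_psi (S : Set B) (hS : S.Nonempty) (x : X) :
    hbar π0 S (psi π0 ε0 S hS x) = ↑(ε0.symm x) := by
  rw [psi_apply, hbar_mk, sig_single, if_pos hS.some_mem]

lemma pi0_comp_sig (S : Set B) : π0.comp (sig (E0 := E0) S) = (nuh S).comp (pih π0) := by
  apply Finsupp.addHom_ext
  intro b e
  simp only [AddMonoidHom.comp_apply]
  rw [sig_single, pih_single, nuh_single]
  split_ifs <;> simp

lemma pi0_hbar (S : Set B) (eh : Ehat π0 S) : π0 (hbar π0 S eh) = nuh S (piS π0 S eh) := by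
  obtain ⟨f, rfl⟩ := QuotientAddGroup.mk'_surjective (NN π0 S) eh
  rw [hbar_mk, piS_mk]
  exact DFunLike.congr_fun (pi0_comp_sig (B := B) π0 S) f

section Lift

variable {G : Type} [AddCommGroup G]

include ε0 in
lemma exists_lift (S : Set B) (hS : S.Nonempty) (hpi0 : Surjective π0)
    (q : G →+ (B →₀ ℚ)) (hEV : ExtVanish G X) :
    ∃ φ : G →+ Ehat π0 S, (piS π0 S).comp φ = q := by
  classical
  set d : G × Ehat π0 S →+ (B →₀ ℚ) :=
    (q.comp (AddMonoidHom.fst G (Ehat π0 S))) - ((piS π0 S).comp (AddMonoidHom.snd G (Ehat π0 S)))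
    with hd
  set P := d.ker with hP
  set π : ↥P →+ G := (AddMonoidHom.fst G (Ehat π0 S)).comp P.subtype with hπ
  have memP : ∀ z : G × Ehat π0 S, z ∈ P ↔ q z.1 = piS π0 S z.2 := by
    intro z
    rw [hP, AddMonoidHom.mem_ker, hd]
    simp [sub_eq_zero]
  have hπs : Surjective π := by
    intro g
    obtain ⟨eh, heh⟩ := piS_surj π0 S hpi0 (q g)
    exact ⟨⟨(g, eh), (memP (g, eh)).mpr heh.symm⟩, rfl⟩
  -- kernel equivalence
  have hj : ∀ z : ↥π.ker, piS π0 S ((z : ↥P) : G × Ehat π0 S).2 = 0 := by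
    intro z
    have h1 : ((z : ↥P) : G × Ehat π0 S).1 = 0 := z.2
    have h2 := (memP _).mp (z : ↥P).2
    rw [h1, map_zero] at h2
    exact h2.symm
  set j : ↥π.ker →+ ↥(piS π0 S).ker :=
    ((AddMonoidHom.snd G (Ehat π0 S)).comp (P.subtype.comp π.ker.subtype)).codRestrict _ hj
    with hjdef
  have hjbij : Function.Bijective j := by
    constructor
    · intro z w hzw
      have h2 : ((z : ↥P) : G × Ehat π0 S).2 = ((w : ↥P) : G × Ehat π0 S).2 :=
        congrArg Subtype.val hzw
      have hz1 : ((z : ↥P) : G × Ehat π0 S).1 = 0 := AddMonoidHom.mem_ker.mp z.2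
      have hw1 : ((w : ↥P) : G × Ehat π0 S).1 = 0 := AddMonoidHom.mem_ker.mp w.2
      have h1 : ((z : ↥P) : G × Ehat π0 S).1 = ((w : ↥P) : G × Ehat π0 S).1 := by
        rw [hz1, hw1]
      ext1; ext1
      exact Prod.ext h1 h2
    · rintro ⟨w, hw⟩
      refine ⟨⟨⟨(0, w), (memP (0, w)).mpr ?_⟩, ?_⟩, ?_⟩
      · rw [map_zero]
        exact (AddMonoidHom.mem_ker.mp hw).symm
      · rfl
      · rfl
  obtain ⟨s, hs⟩ := hEV (↥P) π hπs ⟨(AddEquiv.ofBijective j hjbij).trans (keq π0 ε0 S hS).symm⟩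
  refine ⟨((AddMonoidHom.snd G (Ehat π0 S)).comp P.subtype).comp s, ?_⟩
  refine AddMonoidHom.ext fun g => ?_
  have h1 : ((s g : ↥P) : G × Ehat π0 S).1 = g := DFunLike.congr_fun hs g
  have h2 := (memP _).mp (s g).2
  rw [h1] at h2
  simpa using h2.symm

noncomputable def rho (S : Set B) (hS : S.Nonempty) (q : G →+ (B →₀ ℚ))
    (φ : G →+ Ehat π0 S) (hφ : (piS π0 S).comp φ = q) : ↥q.ker →+ X :=
  ((keq π0 ε0 S hS).symm.toAddMonoidHom).comp
    ((φ.comp q.ker.subtype).codRestrict _ (fun f => by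
      rw [AddMonoidHom.mem_ker, AddMonoidHom.comp_apply]
      have hh := DFunLike.congr_fun hφ (↑f : G)
      rw [AddMonoidHom.comp_apply] at hh
      show (piS π0 S) (φ ↑f) = 0
      rw [hh]
      exact AddMonoidHom.mem_ker.mp f.2))

lemma key (hpi0 : Surjective π0) (q : G →+ (B →₀ ℚ)) (hq : Surjective q)
    (S1 S2 : Set B) (h1 : S1.Nonempty) (h2 : S2.Nonempty) (b : B) (hb1 : b ∈ S1) (hb2 : b ∉ S2)
    (φ1 : G →+ Ehat π0 S1) (hφ1 : (piS π0 S1).comp φ1 = q)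
    (φ2 : G →+ Ehat π0 S2) (hφ2 : (piS π0 S2).comp φ2 = q)
    (hρ : rho π0 ε0 S1 h1 q φ1 hφ1 = rho π0 ε0 S2 h2 q φ2 hφ2) :
    ∃ s : ℚ →+ E0, π0.comp s = AddMonoidHom.id ℚ := by
  set D : G →+ E0 := ((hbar π0 S1).comp φ1) - ((hbar π0 S2).comp φ2) with hD
  have hker : q.ker ≤ D.ker := by
    intro f hf
    set z : ↥q.ker := ⟨f, hf⟩ with hz
    have e1 : φ1 f = psi π0 ε0 S1 h1 (rho π0 ε0 S1 h1 q φ1 hφ1 z) := by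
      rw [rho]
      simp only [AddMonoidHom.comp_apply, AddEquiv.coe_toAddMonoidHom]
      rw [← keq_coe π0 ε0 S1 h1, AddEquiv.apply_symm_apply]
      rfl
    have e2 : φ2 f = psi π0 ε0 S2 h2 (rho π0 ε0 S2 h2 q φ2 hφ2 z) := by
      rw [rho]
      simp only [AddMonoidHom.comp_apply, AddEquiv.coe_toAddMonoidHom]
      rw [← keq_coe π0 ε0 S2 h2, AddEquiv.apply_symm_apply]
      rfl
    rw [AddMonoidHom.mem_ker, hD]
    simp only [AddMonoidHom.sub_apply, AddMonoidHom.comp_apply]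
    rw [e1, e2, hbar_psi, hbar_psi, hρ, sub_self]
  set Dh := (q.liftOfRightInverse (surjInv hq) (rightInverse_surjInv hq)) ⟨D, hker⟩ with hDh
  have hcomp : Dh.comp q = D :=
    q.liftOfRightInverse_comp (surjInv hq) (rightInverse_surjInv hq) ⟨D, hker⟩
  have hpi : ∀ y, π0 (Dh y) = nuh S1 y - nuh S2 y := by
    intro y
    obtain ⟨g, rfl⟩ := hq y
    have hDg : Dh (q g) = D g := DFunLike.congr_fun hcomp g
    rw [hDg, hD]
    simp only [AddMonoidHom.sub_apply, AddMonoidHom.comp_apply]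
    rw [map_sub, pi0_hbar, pi0_hbar]
    rw [← AddMonoidHom.comp_apply (piS π0 S1) φ1, hφ1, ← AddMonoidHom.comp_apply (piS π0 S2) φ2,
      hφ2]
  refine ⟨Dh.comp (Finsupp.singleAddHom b), ?_⟩
  ext zq
  simp only [AddMonoidHom.comp_apply, AddMonoidHom.id_apply, Finsupp.singleAddHom_apply]
  rw [hpi, nuh_single, nuh_single, if_pos hb1, if_neg hb2, sub_zero]

end Lift

end Ext


section Tree2

variable (ι : Type)

abbrev GG := AA ι ⧸ (Phi ι).ker

noncomputable def iotaG : GG ι →+ (Tr ι → ℤ) := QuotientAddGroup.kerLift (Phi ι)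

noncomputable def qG : GG ι →+ ((Br ι) →₀ ℚ) :=
  QuotientAddGroup.lift _ (q0 ι) ker_Phi_le_ker_q0

lemma qG_mk (c : AA ι) : qG ι (QuotientAddGroup.mk' _ c) = q0 ι c := rfl

lemma qG_surj : Function.Surjective (qG ι) := by
  intro qq
  obtain ⟨c, hc⟩ := q0_surj (ι := ι) qq
  exact ⟨QuotientAddGroup.mk' _ c, by rw [qG_mk, hc]⟩

lemma cotorsionfree_GG : Cotorsionfree (GG ι) :=
  cotorsionfree_of_inj_into_intfun (iotaG ι) (QuotientAddGroup.kerLift_injective _)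

lemma ker_qG_supp_finite (f : ↥(qG ι).ker) :
    (Function.support (iotaG ι ↑f)).Finite := by
  obtain ⟨c, hc⟩ := QuotientAddGroup.mk'_surjective ((Phi ι).ker) (↑f : GG ι)
  have hq0 : q0 ι c = 0 := by
    rw [← qG_mk, hc]
    exact AddMonoidHom.mem_ker.mp f.2
  have hiota : iotaG ι ↑f = Phi ι c := by
    rw [← hc, iotaG, QuotientAddGroup.mk'_apply, QuotientAddGroup.kerLift_mk]
  rw [hiota]
  exact supp_Phi_finite hq0

noncomputable def kerinj : ↥(qG ι).ker → (Tr ι →₀ ℤ) :=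
  fun f => Finsupp.ofSupportFinite _ (ker_qG_supp_finite ι f)

lemma kerinj_inj : Function.Injective (kerinj ι) := by
  intro f g hfg
  have h1 : iotaG ι ↑f = iotaG ι ↑g := by
    have h := congrArg DFunLike.coe hfg
    simp only [kerinj, Finsupp.ofSupportFinite_coe] at h
    exact h
  ext1
  exact QuotientAddGroup.kerLift_injective (Phi ι) h1

end Tree2

section Kappa

open Cardinal

lemma exists_kappa (c0 : Cardinal.{0}) :
    ∃ κ : Cardinal.{0}, ℵ₀ ≤ κ ∧ c0 ≤ κ ∧ 2 ^ κ ≤ κ ^ (ℵ₀ : Cardinal.{0}) := by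
  classical
  set ks : ℕ → Cardinal.{0} := fun n => Nat.rec (max c0 ℵ₀) (fun _ ih => 2 ^ ih) n with hks
  refine ⟨Cardinal.sum ks, ?_, ?_, ?_⟩
  · exact le_trans (le_max_right _ _) (Cardinal.le_sum ks 0)
  · exact le_trans (le_max_left _ _) (Cardinal.le_sum ks 0)
  · calc (2 : Cardinal.{0}) ^ Cardinal.sum ks
        = Cardinal.prod (fun n => 2 ^ ks n) := Cardinal.power_sum 2 ks
      _ ≤ Cardinal.prod (fun _ : ℕ => Cardinal.sum ks) :=
        Cardinal.prod_le_prod _ _ (fun n => Cardinal.le_sum ks (n + 1))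
      _ = (Cardinal.sum ks) ^ (Cardinal.mk ℕ) := Cardinal.prod_const' ℕ _
      _ = (Cardinal.sum ks) ^ (ℵ₀ : Cardinal.{0}) := by rw [Cardinal.mk_nat]

end Kappa

end S9


/-- the class of cotorsionfree groups is never of the form
`⊥C = {G : Ext(G, X) = 0 for all X ∈ C}` for a class `C` of abelian groups. -/
theorem statement9 :
    ¬ ∃ C : AddCommGrpCat.{0} → Prop,
      ∀ (G : Type) [AddCommGroup G],
        (Cotorsionfree G ↔ ∀ X : AddCommGrpCat.{0}, C X → ExtVanish G X) := by
  classical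
  rintro ⟨C, hC⟩
  -- ℚ is not cotorsionfree
  have hQ : ¬ Cotorsionfree ℚ := fun h => h.1 ⟨⊤, ⟨AddSubgroup.topEquiv⟩⟩
  -- obtain a witness X0 ∈ C with Ext(ℚ, X0) ≠ 0
  have hex : ∃ X : AddCommGrpCat.{0}, C X ∧ ¬ ExtVanish ℚ X := by
    by_contra h
    push_neg at h
    exact hQ ((hC ℚ).mpr (fun X hX => h X hX))
  obtain ⟨X0, hX0, hnEV⟩ := hex
  rw [ExtVanish] at hnEV
  push_neg at hnEV
  obtain ⟨E0, instE0, π0, hπ0, hker0, hnosplit⟩ := hnEV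
  obtain ⟨ε0⟩ := hker0
  -- choose a suitable cardinal
  obtain ⟨κ, hκω, hκX, hκpow⟩ := S9.exists_kappa (Cardinal.mk X0)
  set ι : Type := Quotient.out κ with hι
  haveI hinf : Infinite ι := Cardinal.infinite_iff.mpr (by rw [hι, Cardinal.mk_out]; exact hκω)
  have hmkι : Cardinal.mk ι = κ := by rw [hι, Cardinal.mk_out]
  -- the tree group G is cotorsionfree, hence Ext(G, X0) = 0
  have hCF : Cotorsionfree (S9.GG ι) := S9.cotorsionfree_GG ι
  have hEV : ExtVanish (S9.GG ι) X0 := (hC (S9.GG ι)).mp hCF X0 hX0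
  set q := S9.qG ι with hqdef
  have hq : Function.Surjective q := S9.qG_surj ι
  -- base point branch
  have hneι : Nonempty ι := inferInstance
  set b0 : S9.Br ι := fun _ => Classical.arbitrary ι with hb0
  set B' := {η : S9.Br ι // η ≠ b0} with hB'
  set TS : Set B' → Set (S9.Br ι) := fun S => {b0} ∪ (Subtype.val '' S) with hTS
  have hTSne : ∀ S, (TS S).Nonempty := fun S => ⟨b0, Or.inl rfl⟩
  have hTSmem : ∀ (S : Set B') (η : B'), ((η : S9.Br ι) ∈ TS S) ↔ η ∈ S := by
    intro S η
    constructor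
    · rintro (h | ⟨w, hw, hww⟩)
      · exact absurd h η.2
      · rwa [← Subtype.coe_injective hww]
    · intro h
      exact Or.inr ⟨η, h, rfl⟩
  have hlift : ∀ S : Set (S9.Br ι), S.Nonempty →
      ∃ φ : S9.GG ι →+ S9.Ehat π0 S, (S9.piS π0 S).comp φ = q :=
    fun S hS => S9.exists_lift π0 ε0 S hS hπ0 q hEV
  set mu : Set B' → (↥q.ker →+ X0) := fun S =>
    S9.rho π0 ε0 (TS S) (hTSne S) q (hlift (TS S) (hTSne S)).choose
      (hlift (TS S) (hTSne S)).choose_spec with hmu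
  -- cardinality: mu cannot be injective
  have hmuni : ¬ Function.Injective mu := by
    intro hinj
    have h1 : Cardinal.mk (Set B') ≤ Cardinal.mk (↥q.ker →+ X0) :=
      Cardinal.mk_le_of_injective hinj
    have h2 : Cardinal.mk (↥q.ker →+ X0) ≤ Cardinal.mk (↥q.ker → X0) :=
      Cardinal.mk_le_of_injective (DFunLike.coe_injective)
    have hFκ : Cardinal.mk ↥q.ker ≤ κ := by
      have i1 : Cardinal.mk ↥q.ker ≤ Cardinal.mk (S9.Tr ι →₀ ℤ) :=
        Cardinal.mk_le_of_injective (S9.kerinj_inj ι)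
      have i2 : Cardinal.mk (S9.Tr ι →₀ ℤ) ≤ Cardinal.mk (Finset (S9.Tr ι × ℤ)) :=
        Cardinal.mk_le_of_injective (Finsupp.graph_injective _ _)
      have i3 : Cardinal.mk (Finset (S9.Tr ι × ℤ)) = Cardinal.mk (S9.Tr ι × ℤ) :=
        Cardinal.mk_finset_of_infinite _
      have i4 : Cardinal.mk (S9.Tr ι × ℤ) = κ := by
        rw [Cardinal.mk_prod]
        simp only [Cardinal.lift_id]
        rw [Cardinal.mk_list_eq_mk ι, hmkι, Cardinal.mk_int]
        rw [Cardinal.mul_eq_max hκω (le_refl _)]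
        exact max_eq_left hκω
      calc Cardinal.mk ↥q.ker ≤ Cardinal.mk (S9.Tr ι →₀ ℤ) := i1
        _ ≤ Cardinal.mk (Finset (S9.Tr ι × ℤ)) := i2
        _ = κ := by rw [i3, i4]
    have h3 : Cardinal.mk (↥q.ker → X0) = Cardinal.mk X0 ^ Cardinal.mk ↥q.ker :=
      (Cardinal.power_def _ _).symm
    have h4 : Cardinal.mk X0 ^ Cardinal.mk ↥q.ker ≤ κ ^ κ := by
      calc Cardinal.mk X0 ^ Cardinal.mk ↥q.ker ≤ κ ^ Cardinal.mk ↥q.ker :=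
            Cardinal.power_le_power_right hκX
        _ ≤ κ ^ κ := Cardinal.power_le_power_left
            (ne_of_gt (lt_of_lt_of_le Cardinal.aleph0_pos hκω)) hFκ
    have h5 : (κ : Cardinal) ^ (κ : Cardinal) = 2 ^ κ := Cardinal.power_self_eq hκω
    have hBκ : Cardinal.mk (S9.Br ι) = κ ^ Cardinal.aleph0 := by
      rw [← hmkι, ← Cardinal.mk_nat, Cardinal.power_def]
    -- injection of Br ι into B'
    have hBB' : Cardinal.mk (S9.Br ι) ≤ Cardinal.mk B' := by
      obtain ⟨x1, hx1⟩ := exists_ne (b0 0)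
      set sh : S9.Br ι → B' := fun η => ⟨fun n => Nat.rec x1 (fun m _ => η m) n, by
        intro hcontra
        have := congrFun hcontra 0
        exact hx1 this⟩ with hsh
      refine Cardinal.mk_le_of_injective (f := sh) ?_
      intro a b hab
      have h := congrArg Subtype.val hab
      funext n
      exact congrFun h (n + 1)
    have hfinal : Cardinal.mk (Set B') < Cardinal.mk (Set B') := by
      calc Cardinal.mk (Set B') ≤ Cardinal.mk (↥q.ker →+ X0) := h1
        _ ≤ Cardinal.mk (↥q.ker → X0) := h2
        _ = Cardinal.mk X0 ^ Cardinal.mk ↥q.ker := h3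
        _ ≤ κ ^ κ := h4
        _ = 2 ^ κ := h5
        _ ≤ κ ^ Cardinal.aleph0 := hκpow
        _ = Cardinal.mk (S9.Br ι) := hBκ.symm
        _ ≤ Cardinal.mk B' := hBB'
        _ < 2 ^ Cardinal.mk B' := Cardinal.cantor _
        _ = Cardinal.mk (Set B') := Cardinal.mk_set.symm
    exact absurd hfinal (lt_irrefl _)
  obtain ⟨S1, S2, hmueq, hne⟩ := Function.not_injective_iff.mp hmuni
  -- find an element of the symmetric difference
  have hsd : ∃ η : B', (η ∈ S1 ∧ η ∉ S2) ∨ (η ∈ S2 ∧ η ∉ S1) := by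
    by_contra h
    push_neg at h
    exact hne (Set.ext (fun η => ⟨(h η).1, (h η).2⟩))
  obtain ⟨η, hη⟩ := hsd
  have happly : ∀ (Sa Sb : Set B'), η ∈ Sa → η ∉ Sb → mu Sa = mu Sb → False := by
    intro Sa Sb ha hb heq
    obtain ⟨s, hs⟩ := S9.key π0 ε0 hπ0 q hq (TS Sa) (TS Sb) (hTSne Sa) (hTSne Sb) (↑η)
      ((hTSmem Sa η).mpr ha) (fun hmem => hb ((hTSmem Sb η).mp hmem))
      (hlift (TS Sa) (hTSne Sa)).choose (hlift (TS Sa) (hTSne Sa)).choose_spec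
      (hlift (TS Sb) (hTSne Sb)).choose (hlift (TS Sb) (hTSne Sb)).choose_spec
      heq
    exact hnosplit s hs
  rcases hη with ⟨h1, h2⟩ | ⟨h1, h2⟩
  · exact happly S1 S2 h1 h2 hmueq
  · exact happly S2 S1 h1 h2 hmueq.symm
end

section
/- Let H be a countable pure subgroup of the Baer-Specker group ℤ^ω that is dense in the product topology on ℤ^ω (where ℤ carries the discrete topology). Then the quotient group ℤ^ω/H is isomorphic to ℤ^ω/ℤ^(ω). -/
noncomputable section
open Submodule Function

/-- Restriction to the first `N` coordinates. -/
def resN (N : ℕ) : (ℕ → ℤ) →ₗ[ℤ] (Fin N → ℤ) := LinearMap.funLeft ℤ ℤ Fin.val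

@[simp] lemma resN_apply (N : ℕ) (x : ℕ → ℤ) (i : Fin N) : resN N x i = x i := rfl

/-- Coordinatewise cast map. -/
def castL (A : Type*) [Ring A] : (ℕ → ℤ) →ₗ[ℤ] (ℕ → A) :=
  ((Int.castRingHom A).toIntLinearMap).compLeft ℕ

@[simp] lemma castL_apply (A : Type*) [Ring A] (x : ℕ → ℤ) (n : ℕ) :
    castL A x n = (x n : A) := rfl

/-- The submodule of functions vanishing below `N`. -/
def vanishBelow (K : Type*) [Semiring K] (N : ℕ) : Submodule K (ℕ → K) where
  carrier := {x | ∀ m < N, x m = 0}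
  zero_mem' := fun m _ => rfl
  add_mem' := by intro a b ha hb m hm; simp [ha m hm, hb m hm]
  smul_mem' := by intro c a ha m hm; simp [ha m hm]

lemma exists_vanish_of_span {K : Type*} [Field K] (s : Finset (ℕ → K)) :
    ∃ N₀ : ℕ, ∀ w ∈ Submodule.span K (s : Set (ℕ → K)), (∀ m < N₀, w m = 0) → w = 0 := by
  set W : Submodule K (ℕ → K) := Submodule.span K (s : Set (ℕ → K)) with hW
  haveI : FiniteDimensional K W := FiniteDimensional.span_of_finite K s.finite_toSet
  set U : ℕ → Submodule K W := fun N => Submodule.comap W.subtype (vanishBelow K N) with hU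
  have hanti : ∀ {N N'}, N ≤ N' → U N' ≤ U N := by
    intro N N' h x hx m hm
    exact hx m (lt_of_lt_of_le hm h)
  set d : ℕ := sInf (Set.range fun N => Module.finrank K (U N)) with hd
  have hdmem : d ∈ Set.range fun N => Module.finrank K (U N) :=
    Nat.sInf_mem (Set.range_nonempty _)
  obtain ⟨N₀, hN₀⟩ := hdmem
  refine ⟨N₀, ?_⟩
  have key : ∀ L, N₀ ≤ L → U L = U N₀ := by
    intro L hL
    refine eq_of_le_of_finrank_le (hanti hL) ?_
    have : Module.finrank K (U N₀) = d := hN₀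
    rw [this]
    exact Nat.sInf_le ⟨L, rfl⟩
  intro w hw hvan
  have hmem : (⟨w, hw⟩ : W) ∈ U N₀ := by intro m hm; exact hvan m hm
  have : ∀ m : ℕ, w m = 0 := by
    intro m
    have h1 : (⟨w, hw⟩ : W) ∈ U (max N₀ (m+1)) := by
      rw [key _ (le_max_left _ _)]; exact hmem
    exact h1 m (lt_of_lt_of_le (Nat.lt_succ_self m) (le_max_right _ _))
  exact funext this

/-- Saturation closure of a submodule of a product group. -/
def satClosure {ι : Type} (G : Submodule ℤ (ι → ℤ)) : Submodule ℤ (ι → ℤ) where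
  carrier := {x | ∃ c : ℤ, c ≠ 0 ∧ c • x ∈ G}
  zero_mem' := ⟨1, one_ne_zero, by simpa using G.zero_mem⟩
  add_mem' := by
    rintro x y ⟨c, hc, hcx⟩ ⟨d, hd, hdy⟩
    refine ⟨c * d, mul_ne_zero hc hd, ?_⟩
    have h : (c * d) • (x + y) = d • (c • x) + c • (d • y) := by
      rw [smul_add, mul_comm c d, mul_smul, mul_comm d c, mul_smul]
    rw [h]
    exact G.add_mem (G.smul_mem _ hcx) (G.smul_mem _ hdy)
  smul_mem' := by
    rintro r x ⟨c, hc, hcx⟩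
    exact ⟨c, hc, by rw [smul_comm]; exact G.smul_mem r hcx⟩

lemma mem_satClosure_of_mem {ι : Type} {G : Submodule ℤ (ι → ℤ)} {x : ι → ℤ} (hx : x ∈ G) :
    x ∈ satClosure G := ⟨1, one_ne_zero, by simpa using hx⟩

lemma le_satClosure {ι : Type} (G : Submodule ℤ (ι → ℤ)) :
    G ≤ satClosure G := fun _ hx => mem_satClosure_of_mem hx

lemma satClosure_saturated {ι : Type} (G : Submodule ℤ (ι → ℤ))
    {c : ℤ} {x : ι → ℤ} (hc : c ≠ 0) (h : c • x ∈ satClosure G) : x ∈ satClosure G := by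
  obtain ⟨d, hd, hdx⟩ := h
  exact ⟨d * c, mul_ne_zero hd hc, by rwa [mul_smul]⟩

lemma step_lemma (H' : Submodule ℤ (ℕ → ℤ))
    (hsat : ∀ (c : ℤ) (x : ℕ → ℤ), c ≠ 0 → c • x ∈ H' → x ∈ H')
    (hdense : ∀ (N : ℕ) (z : Fin N → ℤ), ∃ h ∈ H', resN N h = z)
    (N : ℕ) (F : Submodule ℤ (ℕ → ℤ)) (hFH : F ≤ H') (hFfg : F.FG)
    (a : ℕ → ℤ) (ha : a ∈ H') :
    ∃ (N' : ℕ) (F' : Submodule ℤ (ℕ → ℤ)), N < N' ∧ F ≤ F' ∧ a ∈ F' ∧ F' ≤ H' ∧ F'.FG ∧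
      (∀ x ∈ F', resN N' x = 0 → x = 0) ∧ (∀ z : Fin N' → ℤ, ∃ x ∈ F', resN N' x = z) := by
  classical
  -- the finitely generated subgroup G and its saturation
  set G : Submodule ℤ (ℕ → ℤ) := F ⊔ Submodule.span ℤ {a} with hG
  have hGH : G ≤ H' := sup_le hFH (by
    rw [Submodule.span_le, Set.singleton_subset_iff]; exact ha)
  have hGfg : G.FG := Submodule.FG.sup hFfg (Submodule.fg_span_singleton a)
  set B : Submodule ℤ (ℕ → ℤ) := satClosure G with hB
  have hGB : G ≤ B := le_satClosure G
  have hBH : B ≤ H' := by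
    rintro x ⟨c, hc, hcx⟩
    exact hsat c x hc (hGH hcx)
  -- injectivity of some finite restriction on B
  obtain ⟨N₀, hN₀⟩ : ∃ N₀ : ℕ, ∀ x ∈ B, (∀ m < N₀, x m = 0) → x = 0 := by
    obtain ⟨t, ht⟩ := hGfg
    obtain ⟨N₀, hN₀⟩ := exists_vanish_of_span (K := ℚ) (t.image (castL ℚ))
    refine ⟨N₀, fun x hx hvan => ?_⟩
    obtain ⟨c, hc, hcx⟩ := hx
    have h2 : c • x ∈ Submodule.span ℤ (t : Set (ℕ → ℤ)) := by rw [ht]; exact hcx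
    have h1 : castL ℚ (c • x) ∈ Submodule.span ℚ ((t.image (castL ℚ)) : Set (ℕ → ℚ)) := by
      have h3 := Submodule.mem_map_of_mem (f := castL ℚ) h2
      rw [Submodule.map_span] at h3
      have h4 := Submodule.span_le_restrictScalars ℤ ℚ ((castL ℚ) '' ↑t) h3
      simpa [Finset.coe_image] using h4
    have h5 : castL ℚ (c • x) = 0 := by
      refine hN₀ _ h1 fun m hm => ?_
      have h6 : x m = 0 := hvan m hm
      simp [castL_apply, h6]
    funext m
    have h8 : c * x m = 0 := by
      have h7 := congrFun h5 m
      simp only [castL_apply, Pi.smul_apply, smul_eq_mul, Pi.zero_apply] at h7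
      exact_mod_cast h7
    rcases mul_eq_zero.mp h8 with h | h
    · exact absurd h hc
    · exact h
  have hinjB : ∀ x ∈ B, resN N₀ x = 0 → x = 0 := by
    intro x hx h
    refine hN₀ x hx fun m hm => ?_
    have := congrFun h ⟨m, hm⟩
    simpa using this
  -- B is finitely generated
  have hBfg : B.FG := by
    set f : B →ₗ[ℤ] (Fin N₀ → ℤ) := (resN N₀).comp B.subtype with hf
    have hfinj : Function.Injective f := by
      intro x y hxy
      have h1 : resN N₀ ((x : ℕ → ℤ) - y) = 0 := by
        have : f x - f y = 0 := by rw [hxy]; simp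
        simpa [hf, map_sub] using this
      have h2 := hinjB _ (B.sub_mem x.2 y.2) h1
      exact Subtype.ext (sub_eq_zero.mp h2)
    haveI : Module.Finite ℤ (LinearMap.range f) :=
      Module.Finite.iff_fg.mpr (IsNoetherian.noetherian _)
    haveI : Module.Finite ℤ B := Module.Finite.equiv (LinearEquiv.ofInjective f hfinj).symm
    exact Module.Finite.iff_fg.mp inferInstance
  obtain ⟨gs, hgs⟩ := hBfg
  -- the exponent E of the saturation of the image of B in ℤ^{N₀}
  set Λ₀ : Submodule ℤ (Fin N₀ → ℤ) := Submodule.map (resN N₀) B with hΛ₀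
  set C₀ : Submodule ℤ (Fin N₀ → ℤ) := satClosure Λ₀ with hC₀
  obtain ⟨E, hE0, hE⟩ : ∃ E : ℤ, E ≠ 0 ∧ ∀ y ∈ C₀, E • y ∈ Λ₀ := by
    obtain ⟨u, hu⟩ : C₀.FG := IsNoetherian.noetherian C₀
    have hch : ∀ y : Fin N₀ → ℤ, ∃ c : ℤ, c ≠ 0 ∧ (y ∈ C₀ → c • y ∈ Λ₀) := by
      intro y
      by_cases hy : y ∈ C₀
      · obtain ⟨c, hc, hcy⟩ := hy
        exact ⟨c, hc, fun _ => hcy⟩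
      · exact ⟨1, one_ne_zero, fun h => absurd h hy⟩
    choose c hc0 hcy using hch
    refine ⟨∏ z ∈ u, c z, Finset.prod_ne_zero_iff.mpr (fun z _ => hc0 z), ?_⟩
    intro y hy
    rw [← hu] at hy
    induction hy using Submodule.span_induction with
    | mem w hw =>
        have hwC : w ∈ C₀ := by rw [← hu]; exact Submodule.subset_span hw
        have h1 : (∏ z ∈ u, c z) = c w * ∏ z ∈ u.erase w, c z := (Finset.mul_prod_erase u c hw).symm
        rw [h1, mul_comm, mul_smul]
        exact Λ₀.smul_mem _ (hcy w hwC)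
    | zero => simp
    | add x y _ _ hx hy => rw [smul_add]; exact Λ₀.add_mem hx hy
    | smul r x _ hx => rw [smul_comm]; exact Λ₀.smul_mem r hx
  -- choice of column sets for the primes dividing E
  have hNp : ∀ p : ℕ, ∃ Np : ℕ, p.Prime →
      ∀ b ∈ B, (∀ m < Np, (p : ℤ) ∣ b m) → ∀ m, (p : ℤ) ∣ b m := by
    intro p
    by_cases hp : p.Prime
    · haveI : Fact p.Prime := ⟨hp⟩
      obtain ⟨Np, hNpv⟩ := exists_vanish_of_span (K := ZMod p) (gs.image (castL (ZMod p)))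
      refine ⟨Np, fun _ b hb hdvd => ?_⟩
      have h2 : b ∈ Submodule.span ℤ (gs : Set (ℕ → ℤ)) := by rw [hgs]; exact hb
      have h1 : castL (ZMod p) b ∈
          Submodule.span (ZMod p) ((gs.image (castL (ZMod p))) : Set (ℕ → ZMod p)) := by
        have h3 := Submodule.mem_map_of_mem (f := castL (ZMod p)) h2
        rw [Submodule.map_span] at h3
        have h4 := Submodule.span_le_restrictScalars ℤ (ZMod p) ((castL (ZMod p)) '' ↑gs) h3
        simpa [Finset.coe_image] using h4
      have h5 : castL (ZMod p) b = 0 := by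
        refine hNpv _ h1 fun m hm => ?_
        have := hdvd m hm
        simpa [castL_apply] using (ZMod.intCast_zmod_eq_zero_iff_dvd (b m) p).mpr this
      intro m
      exact (ZMod.intCast_zmod_eq_zero_iff_dvd (b m) p).mp (congrFun h5 m)
    · exact ⟨0, fun h => absurd h hp⟩
  choose Np hNpspec using hNp
  set N' : ℕ := ((E.natAbs.primeFactors.sup Np) ⊔ N₀) ⊔ (N + 1) with hN'
  have hNN' : N < N' := lt_of_lt_of_le (Nat.lt_succ_self N) le_sup_right
  have hN₀N' : N₀ ≤ N' := le_trans le_sup_right le_sup_left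
  -- injectivity of resN N' on B
  have hinjB' : ∀ x ∈ B, resN N' x = 0 → x = 0 := by
    intro x hx h
    refine hN₀ x hx fun m hm => ?_
    have := congrFun h ⟨m, lt_of_lt_of_le hm hN₀N'⟩
    simpa using this
  -- key divisibility property for every prime
  have modInj : ∀ p : ℕ, p.Prime → ∀ b ∈ B, (∀ m < N', (p : ℤ) ∣ b m) →
      ∃ z ∈ B, b = (p : ℤ) • z := by
    intro p hp b hb hdvd
    have hp0 : (p : ℤ) ≠ 0 := by exact_mod_cast hp.ne_zero
    have hzdef : (∀ m, (p : ℤ) ∣ b m) → ∃ z ∈ B, b = (p : ℤ) • z := by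
      intro hall
      have heq : (p : ℤ) • (fun m => b m / p) = b :=
        funext fun m => Int.mul_ediv_cancel' (hall m)
      refine ⟨fun m => b m / p, ?_, heq.symm⟩
      apply satClosure_saturated G (c := (p : ℤ)) hp0
      rw [heq]; exact hb
    by_cases hpe : p ∣ E.natAbs
    · have hple : Np p ≤ N' :=
        le_trans (Finset.le_sup (Nat.mem_primeFactors.mpr
          ⟨hp, hpe, Int.natAbs_ne_zero.mpr hE0⟩)) (le_trans le_sup_left le_sup_left)
      exact hzdef (hNpspec p hp b hb (fun m hm => hdvd m (lt_of_lt_of_le hm hple)))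
    · set y : Fin N₀ → ℤ := fun i => b i / p with hy
      have hpy : resN N₀ b = (p : ℤ) • y :=
        funext fun i => (Int.mul_ediv_cancel' (hdvd i (lt_of_lt_of_le i.2 hN₀N'))).symm
      have hyC : y ∈ C₀ := ⟨p, hp0, by rw [← hpy]; exact Submodule.mem_map_of_mem hb⟩
      obtain ⟨b'', hb''B, hb''⟩ := hE y hyC
      have h6 : (p : ℤ) • b'' = E • b := by
        have h7 : resN N₀ ((p : ℤ) • b'' - E • b) = 0 := by
          rw [map_sub, map_smul, map_smul, hb'', hpy, smul_comm]
          simp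
        have h8 := hinjB _ (B.sub_mem (B.smul_mem _ hb''B) (B.smul_mem _ hb)) h7
        exact sub_eq_zero.mp h8
      have hcop : IsCoprime (p : ℤ) E := by
        rw [Int.isCoprime_iff_gcd_eq_one]
        have hgcd : Int.gcd (p : ℤ) E = Nat.gcd p E.natAbs := by simp [Int.gcd]
        rw [hgcd]
        exact (Nat.Prime.coprime_iff_not_dvd hp).mpr hpe
      obtain ⟨u, v, huv⟩ := hcop
      refine ⟨u • b + v • b'', B.add_mem (B.smul_mem u hb) (B.smul_mem v hb''B), ?_⟩
      calc b = (u * p + v * E) • b := by rw [huv, one_smul]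
        _ = (p : ℤ) • (u • b + v • b'') := by
            rw [add_smul, mul_comm u (p : ℤ), mul_smul, mul_smul, ← h6, smul_add,
              smul_comm v (p : ℤ), smul_comm (p : ℤ) u]
  -- the image of B in ℤ^{N'} is saturated
  set Λ : Submodule ℤ (Fin N' → ℤ) := Submodule.map (resN N') B with hΛ
  have hsatΛ : ∀ (c : ℤ) (y : Fin N' → ℤ), c ≠ 0 → c • y ∈ Λ → y ∈ Λ := by
    have main : ∀ (n : ℕ) (c : ℤ), c.natAbs = n → c ≠ 0 →
        ∀ y : Fin N' → ℤ, c • y ∈ Λ → y ∈ Λ := by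
      intro n
      induction n using Nat.strong_induction_on with
      | _ n IH =>
        intro c hcn hc y hy
        by_cases h1 : c.natAbs = 1
        · rcases Int.natAbs_eq_iff.mp h1 with h | h
          · rw [h] at hy; simpa using hy
          · rw [h] at hy; simpa using Λ.neg_mem hy
        · obtain ⟨p, hp, hpc⟩ := Nat.exists_prime_and_dvd h1
          obtain ⟨b, hbB, hbr⟩ := hy
          have hpdc : (p : ℤ) ∣ c :=
            dvd_trans (Int.natCast_dvd_natCast.mpr hpc) (Int.natAbs_dvd.mpr dvd_rfl)
          obtain ⟨c', hc'⟩ := hpdc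
          have hp0 : (p : ℤ) ≠ 0 := by exact_mod_cast hp.ne_zero
          have hdvd : ∀ m < N', (p : ℤ) ∣ b m := by
            intro m hm
            have := congrFun hbr ⟨m, hm⟩
            simp only [resN_apply, Pi.smul_apply, smul_eq_mul] at this
            exact ⟨c' * y ⟨m, hm⟩, by rw [this, hc']; ring⟩
          obtain ⟨z, hzB, hbz⟩ := modInj p hp b hbB hdvd
          have hres : resN N' z = c' • y := by
            have h2 : (p : ℤ) • resN N' z = (p : ℤ) • (c' • y) := by
              rw [← map_smul, ← hbz, hbr, hc', mul_smul]
            funext i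
            have := congrFun h2 i
            simp only [Pi.smul_apply, smul_eq_mul] at this
            exact mul_left_cancel₀ hp0 this
          have hc'0 : c' ≠ 0 := by rintro rfl; simp [hc'] at hc
          have hlt : c'.natAbs < n := by
            subst hcn
            rw [hc', Int.natAbs_mul]
            have h2 : (p : ℤ).natAbs = p := Int.natAbs_natCast p
            rw [h2]
            have := hp.two_le
            have h3 : 0 < c'.natAbs := Int.natAbs_pos.mpr hc'0
            nlinarith
          exact IH _ hlt c' rfl hc'0 y ⟨z, hzB, hres⟩
    intro c y hc hy
    exact main c.natAbs c rfl hc y hy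
  -- the quotient is finite free; choose preimages of a basis
  haveI hzQ : NoZeroSMulDivisors ℤ ((Fin N' → ℤ) ⧸ Λ) := by
    constructor
    intro c x h
    rcases eq_or_ne c 0 with hc | hc
    · exact Or.inl hc
    · right
      obtain ⟨y, rfl⟩ := Submodule.Quotient.mk_surjective Λ x
      rw [← Submodule.Quotient.mk_smul, Submodule.Quotient.mk_eq_zero] at h
      exact (Submodule.Quotient.mk_eq_zero Λ).mpr (hsatΛ c y hc h)
  haveI : Module.Finite ℤ ((Fin N' → ℤ) ⧸ Λ) :=
    Module.Finite.of_surjective Λ.mkQ (Submodule.Quotient.mk_surjective Λ)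
  haveI : Module.Free ℤ ((Fin N' → ℤ) ⧸ Λ) := Module.free_of_finite_type_torsion_free'
  set β := Module.Free.chooseBasis ℤ ((Fin N' → ℤ) ⧸ Λ) with hβ
  have hr : ∀ i, ∃ rr : Fin N' → ℤ, Λ.mkQ rr = β i :=
    fun i => Submodule.Quotient.mk_surjective Λ (β i)
  choose r hrspec using hr
  have hhex : ∀ i, ∃ h ∈ H', resN N' h = r i := fun i => hdense N' (r i)
  choose hfun hhH hhres using hhex
  set F' : Submodule ℤ (ℕ → ℤ) := B ⊔ Submodule.span ℤ (Set.range hfun) with hF'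
  have hBF' : B ≤ F' := le_sup_left
  refine ⟨N', F', hNN', ?_, ?_, ?_, ?_, ?_, ?_⟩
  · exact le_trans (le_trans le_sup_left hGB) hBF'
  · exact hBF' (hGB (Submodule.mem_sup_right (Submodule.mem_span_singleton_self a)))
  · exact sup_le hBH (Submodule.span_le.mpr (Set.range_subset_iff.mpr hhH))
  · exact Submodule.FG.sup ⟨gs, hgs⟩ (Submodule.fg_span (Set.finite_range hfun))
  · -- injectivity
    intro x hxF hres0
    obtain ⟨g, hgB, w, hw, rfl⟩ := Submodule.mem_sup.mp hxF
    obtain ⟨cc, hcc⟩ := (mem_span_range_iff_exists_fun ℤ).mp hw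
    have h1 : resN N' g + ∑ i, cc i • r i = 0 := by
      rw [← hres0, map_add]
      congr 1
      rw [← hcc, map_sum]
      exact Finset.sum_congr rfl fun i _ => by rw [map_smul, hhres]
    have h2 : ∑ i, cc i • β i = 0 := by
      have h3 := congrArg Λ.mkQ h1
      rw [map_add, map_sum, map_zero] at h3
      have h4 : Λ.mkQ (resN N' g) = 0 := by
        rw [← LinearMap.mem_ker, Submodule.ker_mkQ]
        exact Submodule.mem_map_of_mem hgB
      rw [h4, zero_add] at h3
      rw [← h3]
      exact Finset.sum_congr rfl fun i _ => by rw [map_smul, hrspec]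
    have hcc0 : ∀ i, cc i = 0 :=
      Fintype.linearIndependent_iff.mp β.linearIndependent cc h2
    have hw0 : w = 0 := by
      rw [← hcc]
      exact Finset.sum_eq_zero fun i _ => by rw [hcc0 i, zero_smul]
    have hg0 : g = 0 := by
      apply hinjB' g hgB
      rw [hw0, add_zero] at hres0
      exact hres0
    rw [hg0, hw0, add_zero]
  · -- surjectivity
    intro z
    set q := Λ.mkQ z with hq
    set cc := β.repr q with hccdef
    have hrepr : ∑ i, cc i • β i = q := β.sum_repr q
    have h7 : Λ.mkQ (z - ∑ i, cc i • r i) = 0 := by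
      rw [map_sub, map_sum]
      have h5 : ∑ i, Λ.mkQ (cc i • r i) = q := by
        rw [← hrepr]
        exact Finset.sum_congr rfl fun i _ => by rw [map_smul, hrspec]
      rw [h5, ← hq, sub_self]
    have hzw : z - ∑ i, cc i • r i ∈ Λ := by
      rwa [Submodule.mkQ_apply, Submodule.Quotient.mk_eq_zero] at h7
    obtain ⟨g, hgB, hg⟩ := hzw
    refine ⟨g + ∑ i, cc i • hfun i, ?_, ?_⟩
    · refine Submodule.add_mem _ (hBF' hgB) (Submodule.mem_sup_right ?_)
      exact Submodule.sum_mem _ fun i _ =>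
        Submodule.smul_mem _ _ (Submodule.subset_span ⟨i, rfl⟩)
    · rw [map_add, hg, map_sum]
      have h6 : ∑ i, resN N' (cc i • hfun i) = ∑ i, cc i • r i :=
        Finset.sum_congr rfl fun i _ => by rw [map_smul, hhres]
      rw [h6, sub_add_cancel]

lemma exists_autEquiv (H' : Submodule ℤ (ℕ → ℤ))
    (hsat : ∀ (c : ℤ) (x : ℕ → ℤ), c ≠ 0 → c • x ∈ H' → x ∈ H')
    (hdense : ∀ (N : ℕ) (z : Fin N → ℤ), ∃ h ∈ H', resN N h = z)
    (a : ℕ → (ℕ → ℤ)) (haH : ∀ k, a k ∈ H')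
    (hacover : ∀ h ∈ H', ∃ k, a k = h) :
    ∃ Φ : (ℕ → ℤ) ≃+ (ℕ → ℤ), ∀ t, (Φ t ∈ H' ↔ (Function.support t).Finite) := by
  classical
  -- the recursively constructed stages
  let T := {p : ℕ × Submodule ℤ (ℕ → ℤ) // p.2 ≤ H' ∧ p.2.FG ∧
    (∀ x ∈ p.2, resN p.1 x = 0 → x = 0) ∧ (∀ z : Fin p.1 → ℤ, ∃ x ∈ p.2, resN p.1 x = z)}
  have step' : ∀ (st : T) (k : ℕ), ∃ st' : T,
      st.1.1 < st'.1.1 ∧ st.1.2 ≤ st'.1.2 ∧ a k ∈ st'.1.2 := by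
    rintro ⟨⟨nn, Fk⟩, hFH, hFG, hinj, hsurj⟩ k
    obtain ⟨N', F', h1, h2, h3, h4, h5, h6, h7⟩ :=
      step_lemma H' hsat hdense nn Fk hFH hFG (a k) (haH k)
    exact ⟨⟨⟨N', F'⟩, h4, h5, h6, h7⟩, h1, h2, h3⟩
  choose next hnext1 hnext2 hnext3 using step'
  let base : T := ⟨⟨0, ⊥⟩, bot_le, Submodule.fg_bot,
    fun x hx _ => hx, fun z => ⟨0, Submodule.zero_mem _, funext fun i => Fin.elim0 i⟩⟩
  let st : ℕ → T := fun k => Nat.rec base (fun k ih => next ih k) k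
  set nf : ℕ → ℕ := fun k => (st k).1.1 with hnf
  set Fk : ℕ → Submodule ℤ (ℕ → ℤ) := fun k => (st k).1.2 with hFk
  have hst_succ : ∀ k, st (k + 1) = next (st k) k := fun k => rfl
  have hn0 : nf 0 = 0 := rfl
  have hlt : ∀ k, nf k < nf (k + 1) := fun k => hnext1 (st k) k
  have hFle : ∀ k, Fk k ≤ Fk (k + 1) := fun k => hnext2 (st k) k
  have hak : ∀ k, a k ∈ Fk (k + 1) := fun k => hnext3 (st k) k
  have hFH : ∀ k, Fk k ≤ H' := fun k => (st k).2.1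
  have hinj : ∀ k, ∀ x ∈ Fk k, resN (nf k) x = 0 → x = 0 := fun k => (st k).2.2.2.1
  have hsurj : ∀ k, ∀ z : Fin (nf k) → ℤ, ∃ x, x ∈ Fk k ∧ resN (nf k) x = z := by
    intro k z
    obtain ⟨x, hx1, hx2⟩ := (st k).2.2.2.2 z
    exact ⟨x, hx1, hx2⟩
  have hnmono : StrictMono nf := strictMono_nat_of_lt_succ hlt
  have hnge : ∀ k, k ≤ nf k := fun k => hnmono.le_apply
  have hFmono : Monotone Fk := monotone_nat_of_le_succ hFle
  have huniq : ∀ k, ∀ x y, x ∈ Fk k → y ∈ Fk k →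
      resN (nf k) x = resN (nf k) y → x = y := by
    intro k x y hx hy hxy
    have h1 : resN (nf k) (x - y) = 0 := by rw [map_sub, hxy, sub_self]
    have := hinj k (x - y) ((Fk k).sub_mem hx hy) h1
    exact sub_eq_zero.mp this
  choose lift hliftmem hliftres using hsurj
  -- the index of the first stage seeing coordinate s
  have hKex : ∀ s : ℕ, ∃ k, s < nf k := fun s => ⟨s + 1, lt_of_lt_of_le (Nat.lt_succ_self s) (hnge (s + 1))⟩
  set K : ℕ → ℕ := fun s => Nat.find (hKex s) with hK
  have hKspec : ∀ s, s < nf (K s) := fun s => Nat.find_spec (hKex s)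
  have hKmin : ∀ s k, s < nf k → K s ≤ k := fun s k h => Nat.find_min' (hKex s) h
  have hKgt : ∀ s k, nf k ≤ s → k < K s := by
    intro s k h
    by_contra hc
    push_neg at hc
    exact absurd (lt_of_le_of_lt (le_trans (hnmono.le_iff_le.mpr hc) h) (hKspec s)) (lt_irrefl _)
  -- the "basis" vectors
  set b : ℕ → (ℕ → ℤ) := fun s => lift (K s) (Pi.single (⟨s, hKspec s⟩ : Fin (nf (K s))) 1) with hb
  have hbF : ∀ s, b s ∈ Fk (K s) := fun s => hliftmem _ _
  have hbcoord : ∀ s m, m < nf (K s) → b s m = if m = s then 1 else 0 := by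
    intro s m hm
    have h1 := congrFun (hliftres (K s) (Pi.single (⟨s, hKspec s⟩ : Fin (nf (K s))) 1)) ⟨m, hm⟩
    simpa [resN_apply, Pi.single_apply, Fin.mk.injEq] using h1
  have hbF' : ∀ s k, s < nf k → b s ∈ Fk k := fun s k h => hFmono (hKmin s k h) (hbF s)
  have hbzero : ∀ s k m, nf k ≤ s → m < nf k → b s m = 0 := by
    intro s k m hs hm
    have h1 : m < nf (K s) := lt_of_lt_of_le hm (hnmono.le_iff_le.mpr (le_of_lt (hKgt s k hs)))
    rw [hbcoord s m h1]
    have : m ≠ s := ne_of_lt (lt_of_lt_of_le hm hs)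
    simp [this]
  -- partial sums
  set psum : ℕ → (ℕ → ℤ) → (ℕ → ℤ) := fun k t => ∑ s ∈ Finset.range (nf k), t s • b s with hpsum
  have hpsum_mem : ∀ k t, psum k t ∈ Fk k := by
    intro k t
    exact Submodule.sum_mem _ fun s hs =>
      Submodule.smul_mem _ _ (hbF' s k (Finset.mem_range.mp hs))
  have hpsum_coord : ∀ k t m, psum k t m = ∑ s ∈ Finset.range (nf k), t s * b s m := by
    intro k t m
    rw [hpsum]
    simp [Finset.sum_apply]
  have hpsum_ext : ∀ t k l, k ≤ l → ∀ m, m < nf k → psum l t m = psum k t m := by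
    intro t k l hkl m hm
    rw [hpsum_coord, hpsum_coord]
    have h1 : ∑ s ∈ Finset.range (nf k), t s * b s m
        + ∑ s ∈ Finset.Ico (nf k) (nf l), t s * b s m
        = ∑ s ∈ Finset.range (nf l), t s * b s m :=
      Finset.sum_range_add_sum_Ico _ (hnmono.le_iff_le.mpr hkl)
    rw [← h1]
    have h2 : ∑ s ∈ Finset.Ico (nf k) (nf l), t s * b s m = 0 :=
      Finset.sum_eq_zero fun s hs => by
        rw [hbzero s k m (Finset.mem_Ico.mp hs).1 hm, mul_zero]
    rw [h2, add_zero]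
  -- the homomorphism
  set Phi : (ℕ → ℤ) → (ℕ → ℤ) := fun t m => psum (m + 1) t m with hPhi
  have hform : ∀ t k m, m < nf k → Phi t m = psum k t m := by
    intro t k m hm
    have hm' : m < nf (m + 1) := lt_of_lt_of_le (Nat.lt_succ_self m) (hnge (m + 1))
    rcases le_total k (m + 1) with h | h
    · rw [hPhi]
      exact hpsum_ext t k (m + 1) h m hm
    · rw [hPhi]
      exact (hpsum_ext t (m + 1) k h m hm').symm
  have hKeqsucc : ∀ s k, nf k ≤ s → s < nf (k + 1) → K s = k + 1 := by
    intro s k h1 h2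
    exact le_antisymm (hKmin s (k + 1) h2) (hKgt s k h1)
  -- injectivity of coefficients
  have hcoefzero : ∀ t, (∀ k, psum k t = 0) → ∀ s, t s = 0 := by
    intro t hz s
    -- induction on k: all coefficients below nf k vanish
    have main : ∀ k, ∀ s, s < nf k → t s = 0 := by
      intro k
      induction k with
      | zero => intro s hs; rw [hn0] at hs; exact absurd hs (Nat.not_lt_zero s)
      | succ k ih =>
        intro s hs
        rcases lt_or_ge s (nf k) with h | h
        · exact ih s h
        · -- the block sum vanishes
          have hblock : ∑ u ∈ Finset.Ico (nf k) (nf (k + 1)), t u • b u = 0 := by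
            have h1 : psum (k + 1) t = psum k t + ∑ u ∈ Finset.Ico (nf k) (nf (k + 1)), t u • b u := by
              rw [hpsum]
              have := Finset.sum_range_add_sum_Ico (fun u => t u • b u)
                (hnmono.le_iff_le.mpr (Nat.le_succ k))
              exact this.symm
            rw [hz (k + 1), hz k, zero_add] at h1
            exact h1.symm
          have h2 := congrFun hblock s
          rw [Finset.sum_apply] at h2
          have h3 : ∑ u ∈ Finset.Ico (nf k) (nf (k + 1)), (t u • b u) s = t s := by
            rw [Finset.sum_eq_single s]
            · have hKs : K s = k + 1 := hKeqsucc s k h hs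
              have : b s s = 1 := by
                rw [hbcoord s s (by rw [hKs]; exact hs)]
                simp
              simp [this]
            · intro u hu hus
              have hKu : K u = k + 1 := hKeqsucc u k (Finset.mem_Ico.mp hu).1 (Finset.mem_Ico.mp hu).2
              have : b u s = 0 := by
                rw [hbcoord u s (by rw [hKu]; exact hs)]
                simp [Ne.symm hus]
              simp [this]
            · intro hnotmem
              exact absurd (Finset.mem_Ico.mpr ⟨h, hs⟩) hnotmem
          rw [h3] at h2
          simpa using h2
    exact main (s + 1) s (lt_of_lt_of_le (Nat.lt_succ_self s) (hnge (s + 1)))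
  -- surjectivity data
  have hsurjdata : ∀ x : ℕ → ℤ, ∃ t : ℕ → ℤ, Phi t = x ∧
      (∀ k, x ∈ Fk k → ∀ s, nf k ≤ s → t s = 0) := by
    intro x
    set v : ℕ → (ℕ → ℤ) := fun k => lift k (resN (nf k) x) with hv
    have hvmem : ∀ k, v k ∈ Fk k := fun k => hliftmem _ _
    have hvres : ∀ k m, m < nf k → v k m = x m := by
      intro k m hm
      have := congrFun (hliftres k (resN (nf k) x)) ⟨m, hm⟩
      simpa using this
    set t : ℕ → ℤ := fun s => v (K s) s - v (K s - 1) s with ht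
    have hKpos : ∀ s, 0 < K s := by
      intro s
      rcases Nat.eq_zero_or_pos (K s) with h | h
      · exfalso
        have := hKspec s
        rw [h, hn0] at this
        exact absurd this (Nat.not_lt_zero s)
      · exact h
    have claimA : ∀ k, psum k t = v k := by
      intro k
      induction k with
      | zero =>
        have h1 : psum 0 t = 0 := by
          rw [hpsum]
          have : nf 0 = 0 := hn0
          simp [this]
        have h2 : v 0 = 0 := by
          apply hinj 0 (v 0) (hvmem 0)
          funext i
          rw [hn0] at i
          exact Fin.elim0 i
        rw [h1, h2]
      | succ k ih =>
        have hblockeq : v (k + 1) - v k = ∑ u ∈ Finset.Ico (nf k) (nf (k + 1)), t u • b u := by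
          apply huniq (k + 1)
          · exact (Fk (k + 1)).sub_mem (hvmem (k + 1)) (hFle k (hvmem k))
          · exact Submodule.sum_mem _ fun u hu =>
              Submodule.smul_mem _ _ (hbF' u (k + 1) (Finset.mem_Ico.mp hu).2)
          · funext i
            obtain ⟨m, hm⟩ := i
            simp only [resN_apply, Pi.sub_apply]
            have hrhs : (∑ u ∈ Finset.Ico (nf k) (nf (k + 1)), t u • b u) m
                = if nf k ≤ m then t m else 0 := by
              rw [Finset.sum_apply]
              by_cases hcase : nf k ≤ m
              · rw [Finset.sum_eq_single m]
                · have hKm : K m = k + 1 := hKeqsucc m k hcase hm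
                  have : b m m = 1 := by
                    rw [hbcoord m m (by rw [hKm]; exact hm)]
                    simp
                  simp [this, hcase]
                · intro u hu hum
                  have hKu : K u = k + 1 :=
                    hKeqsucc u k (Finset.mem_Ico.mp hu).1 (Finset.mem_Ico.mp hu).2
                  have : b u m = 0 := by
                    rw [hbcoord u m (by rw [hKu]; exact hm)]
                    simp [Ne.symm hum]
                  simp [this]
                · intro hnm
                  exact absurd (Finset.mem_Ico.mpr ⟨hcase, hm⟩) hnm
              · rw [if_neg hcase]
                apply Finset.sum_eq_zero
                intro u hu
                push_neg at hcase
                have : b u m = 0 := hbzero u k m (Finset.mem_Ico.mp hu).1 hcase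
                simp [this]
            rw [hrhs]
            by_cases hcase : nf k ≤ m
            · have hKm : K m = k + 1 := hKeqsucc m k hcase hm
              rw [ht]
              simp only [hKm]
              simp [hcase]
            · push_neg at hcase
              rw [hvres (k + 1) m hm, hvres k m hcase, if_neg (not_le.mpr hcase)]
              simp
        have h1 : psum (k + 1) t = psum k t + ∑ u ∈ Finset.Ico (nf k) (nf (k + 1)), t u • b u := by
          rw [hpsum]
          exact (Finset.sum_range_add_sum_Ico (fun u => t u • b u)
            (hnmono.le_iff_le.mpr (Nat.le_succ k))).symm
        rw [h1, ih, ← hblockeq]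
        abel
    refine ⟨t, ?_, ?_⟩
    · funext m
      have hm : m < nf (m + 1) := lt_of_lt_of_le (Nat.lt_succ_self m) (hnge (m + 1))
      rw [hform t (m + 1) m hm, claimA (m + 1), hvres (m + 1) m hm]
    · intro k hxk s hs
      have hvk : ∀ l, k ≤ l → v l = x := by
        intro l hl
        exact huniq l (v l) x (hvmem l) (hFmono hl hxk) (hliftres l (resN (nf l) x))
      have h1 : k < K s := hKgt s k hs
      have h2 : v (K s) = x := hvk (K s) (le_of_lt h1)
      have h3 : v (K s - 1) = x := hvk (K s - 1) (Nat.le_sub_one_of_lt h1)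
      rw [ht]
      simp [h2, h3]
  -- additivity
  have hadd : ∀ t t', Phi (t + t') = Phi t + Phi t' := by
    intro t t'
    funext m
    have : psum (m + 1) (t + t') = psum (m + 1) t + psum (m + 1) t' := by
      rw [hpsum]
      rw [← Finset.sum_add_distrib]
      exact Finset.sum_congr rfl fun s _ => by
        simp [add_smul, Pi.add_apply]
    simp only [hPhi, this, Pi.add_apply]
  -- injectivity
  have hinjPhi : ∀ t, Phi t = 0 → t = 0 := by
    intro t hPt
    have hz : ∀ k, psum k t = 0 := by
      intro k
      apply hinj k (psum k t) (hpsum_mem k t)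
      funext i
      obtain ⟨m, hm⟩ := i
      have := congrFun hPt m
      rw [hform t k m hm] at this
      simpa using this
    funext s
    exact hcoefzero t hz s
  -- the image characterization
  have hmem : ∀ t, Phi t ∈ H' ↔ (Function.support t).Finite := by
    intro t
    constructor
    · intro hPt
      obtain ⟨j, hj⟩ := hacover (Phi t) hPt
      have hxF : Phi t ∈ Fk (j + 1) := by rw [← hj]; exact hak j
      obtain ⟨t', ht'1, ht'2⟩ := hsurjdata (Phi t)
      have htt' : t' = t := by
        have h1 : Phi (t' - t) = 0 := by
          have hsub : ∀ u u', Phi (u - u') = Phi u - Phi u' := by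
            intro u u'
            have := hadd (u - u') u'
            rw [sub_add_cancel] at this
            rw [this]
            abel
          rw [hsub, ht'1, sub_self]
        have := hinjPhi _ h1
        funext s
        have := congrFun this s
        simp only [Pi.sub_apply, Pi.zero_apply] at this
        linarith
      rw [← htt']
      apply Set.Finite.subset (Set.finite_Iio (nf (j + 1)))
      intro s hs
      simp only [Set.mem_Iio]
      by_contra hc
      push_neg at hc
      exact hs (ht'2 (j + 1) hxF s hc)
    · intro hfin
      obtain ⟨Bnd, hBnd⟩ : ∃ Bnd, ∀ s ∈ Function.support t, s ≤ Bnd := by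
        rcases Set.eq_empty_or_nonempty (Function.support t) with h | h
        · exact ⟨0, fun s hs => by rw [h] at hs; exact absurd hs (Set.notMem_empty s)⟩
        · obtain ⟨Bnd, hBnd⟩ := hfin.bddAbove
          exact ⟨Bnd, fun s hs => hBnd hs⟩
      have htz : ∀ s, nf (Bnd + 1) ≤ s → t s = 0 := by
        intro s hs
        by_contra hc
        have h1 : s ∈ Function.support t := hc
        have h2 := hBnd s h1
        have h3 : Bnd + 1 ≤ nf (Bnd + 1) := hnge (Bnd + 1)
        omega
      have hPeq : Phi t = psum (Bnd + 1) t := by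
        funext m
        rcases le_total (m + 1) (Bnd + 1) with h | h
        · rw [hform t (Bnd + 1) m (lt_of_lt_of_le (lt_of_lt_of_le (Nat.lt_succ_self m) (hnge (m + 1))) (hnmono.le_iff_le.mpr h))]
        · have hm : m < nf (m + 1) := lt_of_lt_of_le (Nat.lt_succ_self m) (hnge (m + 1))
          rw [hform t (m + 1) m hm, hpsum_coord (m + 1) t m, hpsum_coord (Bnd + 1) t m]
          have h1 : ∑ s ∈ Finset.range (nf (Bnd + 1)), t s * b s m
              + ∑ s ∈ Finset.Ico (nf (Bnd + 1)) (nf (m + 1)), t s * b s m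
              = ∑ s ∈ Finset.range (nf (m + 1)), t s * b s m :=
            Finset.sum_range_add_sum_Ico _ (hnmono.le_iff_le.mpr h)
          rw [← h1]
          have h2 : ∑ s ∈ Finset.Ico (nf (Bnd + 1)) (nf (m + 1)), t s * b s m = 0 :=
            Finset.sum_eq_zero fun s hs => by
              rw [htz s (Finset.mem_Ico.mp hs).1, zero_mul]
          rw [h2, add_zero]
      rw [hPeq]
      exact hFH (Bnd + 1) (hpsum_mem (Bnd + 1) t)
  -- surjectivity
  have hsurjPhi : Function.Surjective Phi := by
    intro x
    obtain ⟨t, ht, _⟩ := hsurjdata x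
    exact ⟨t, ht⟩
  -- assemble the equivalence
  set Φhom : (ℕ → ℤ) →+ (ℕ → ℤ) := AddMonoidHom.mk' Phi hadd with hΦhom
  have hbij : Function.Bijective Φhom := by
    constructor
    · intro t t' h
      have h1 : Phi (t - t') = 0 := by
        have h2 : Phi (t - t') + Phi t' = Phi t := by
          rw [← hadd, sub_add_cancel]
        have : Phi t = Phi t' := h
        rw [this] at h2
        simpa using h2
      have := hinjPhi _ h1
      funext s
      have := congrFun this s
      simp only [Pi.sub_apply, Pi.zero_apply] at this
      linarith
    · exact hsurjPhi
  exact ⟨AddEquiv.ofBijective Φhom hbij, fun t => hmem t⟩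

end

/-- The subgroup `ℤ^(ω)` of finitely supported functions in the Baer-Specker group `ℤ^ω`. -/
def finSuppSubgroup : AddSubgroup (ℕ → ℤ) where
  carrier := {x | (Function.support x).Finite}
  zero_mem' := by simp
  add_mem' := by
    intro a b ha hb
    exact Set.Finite.subset (ha.union hb) (Function.support_add a b)
  neg_mem' := by
    intro a ha
    simpa [Function.support_neg] using ha

/-- Chase: if `H` is a countable pure subgroup of the Baer-Specker group
`ℤ^ω` that is dense in the product topology (with `ℤ` discrete), then `ℤ^ω/H` is
isomorphic to `ℤ^ω/ℤ^(ω)`. -/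
theorem statement12 (H : AddSubgroup (ℕ → ℤ)) (hcount : Countable H)
    (hpure : ∀ n : ℕ, 0 < n → ∀ h ∈ H, (∃ g : ℕ → ℤ, n • g = h) → ∃ k ∈ H, n • k = h)
    (hdense : Dense (H : Set (ℕ → ℤ))) :
    Nonempty (((ℕ → ℤ) ⧸ H) ≃+ ((ℕ → ℤ) ⧸ finSuppSubgroup)) := by
  classical
  set H' : Submodule ℤ (ℕ → ℤ) := AddSubgroup.toIntSubmodule H with hH'
  have hmemH' : ∀ x : ℕ → ℤ, x ∈ H' ↔ x ∈ H := fun x => Iff.rfl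
  -- saturation from purity
  have key : ∀ (n : ℕ), 0 < n → ∀ x : ℕ → ℤ, (n : ℤ) • x ∈ H' → x ∈ H' := by
    intro n hn x hnx
    have h1 : (n • x : ℕ → ℤ) ∈ H := by
      have h2 : (n : ℤ) • x = n • x := natCast_zsmul x n
      rw [← h2]
      exact (hmemH' _).mp hnx
    obtain ⟨k, hk, hnk⟩ := hpure n hn (n • x) h1 ⟨x, rfl⟩
    have hkx : k = x := by
      funext m
      have h3 := congrFun hnk m
      simp only [Pi.smul_apply, nsmul_eq_mul] at h3
      have hn0 : (n : ℤ) ≠ 0 := by exact_mod_cast hn.ne'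
      exact mul_left_cancel₀ hn0 h3
    rw [← hkx]
    exact (hmemH' k).mpr hk
  have hsat : ∀ (c : ℤ) (x : ℕ → ℤ), c ≠ 0 → c • x ∈ H' → x ∈ H' := by
    intro c x hc hcx
    rcases lt_trichotomy c 0 with h | h | h
    · have h1 : ((-c).toNat : ℤ) = -c := Int.toNat_of_nonneg (by linarith)
      have h2 : ((-c).toNat : ℤ) • (-x) = c • x := by rw [h1]; simp
      have h3 : (-x) ∈ H' := by
        apply key (-c).toNat (by omega) (-x)
        rw [h2]; exact hcx
      have := H'.neg_mem h3
      simpa using this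
    · exact absurd h hc
    · have h1 : (c.toNat : ℤ) = c := Int.toNat_of_nonneg h.le
      apply key c.toNat (by omega) x
      rw [h1]; exact hcx
  -- density in the restriction form
  have hdenseN : ∀ (N : ℕ) (z : Fin N → ℤ), ∃ h ∈ H', resN N h = z := by
    intro N z
    have hopen : IsOpen {x : ℕ → ℤ | resN N x = z} := by
      have heq : {x : ℕ → ℤ | resN N x = z}
          = ⋂ i : Fin N, (fun x : ℕ → ℤ => x i) ⁻¹' {z i} := by
        ext x
        simp only [Set.mem_setOf_eq, Set.mem_iInter, Set.mem_preimage, Set.mem_singleton_iff]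
        constructor
        · intro hx i; exact congrFun hx i
        · intro hx; funext i; exact hx i
      rw [heq]
      exact isOpen_iInter_of_finite fun i =>
        (continuous_apply (i : ℕ)).isOpen_preimage _ (isOpen_discrete _)
    have hne : {x : ℕ → ℤ | resN N x = z}.Nonempty := by
      refine ⟨fun m => if hm : m < N then z ⟨m, hm⟩ else 0, ?_⟩
      simp only [Set.mem_setOf_eq]
      funext i
      simp [resN_apply, i.2]
    obtain ⟨hh, hh1, hh2⟩ := hdense.exists_mem_open hopen hne
    exact ⟨hh, (hmemH' hh).mpr hh1, hh2⟩
  -- enumeration of H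
  haveI : Nonempty H := ⟨⟨0, H.zero_mem⟩⟩
  obtain ⟨f, hf⟩ := exists_surjective_nat H
  have haH : ∀ k, ((f k : ℕ → ℤ)) ∈ H' := fun k => (hmemH' _).mpr (f k).2
  have hacover : ∀ h ∈ H', ∃ k, ((f k : ℕ → ℤ)) = h := by
    intro h hh
    obtain ⟨k, hk⟩ := hf ⟨h, (hmemH' h).mp hh⟩
    exact ⟨k, congrArg Subtype.val hk⟩
  obtain ⟨Φ, hΦ⟩ := exists_autEquiv H' hsat hdenseN (fun k => (f k : ℕ → ℤ)) haH hacover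
  have hmap : AddSubgroup.map (Φ : (ℕ → ℤ) ≃+ (ℕ → ℤ)) finSuppSubgroup = H := by
    ext x
    simp only [AddSubgroup.mem_map]
    constructor
    · rintro ⟨t, htfin, rfl⟩
      exact (hmemH' _).mp ((hΦ t).mpr htfin)
    · intro hx
      refine ⟨Φ.symm x, ?_, by simp⟩
      have h1 : Φ (Φ.symm x) ∈ H' := by
        rw [AddEquiv.apply_symm_apply]
        exact (hmemH' x).mpr hx
      exact (hΦ _).mp h1
  exact ⟨(QuotientAddGroup.congr finSuppSubgroup H Φ hmap).symm⟩
end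

section
/- Fix a prime p, and let H be the subgroup of the Baer-Specker group ℤ^ω consisting of all elements whose tails are divisible by arbitrarily large powers of p, i.e., H = {x ∈ ℤ^ω : ∀ k ∈ ℕ, ∃ N ∈ ℕ, ∀ n ≥ N, p^k ∣ x(n)}. Then H is uncountable and H is not a free abelian group (H is not free as a ℤ-module). -/
/-- The subgroup of the Baer-Specker group `ℤ^ω` of elements whose tails are divisible
by arbitrarily large powers of `p`. -/
def tailDiv (p : ℕ) : AddSubgroup (ℕ → ℤ) where
  carrier := {x | ∀ k : ℕ, ∃ N : ℕ, ∀ n ≥ N, (p : ℤ) ^ k ∣ x n}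
  zero_mem' := fun _ => ⟨0, fun _ _ => dvd_zero _⟩
  add_mem' := by
    intro a b ha hb k
    obtain ⟨Na, hNa⟩ := ha k
    obtain ⟨Nb, hNb⟩ := hb k
    refine ⟨max Na Nb, fun n hn => ?_⟩
    have h1 := hNa n (le_trans (le_max_left _ _) hn)
    have h2 := hNb n (le_trans (le_max_right _ _) hn)
    simpa using dvd_add h1 h2
  neg_mem' := by
    intro a ha k
    obtain ⟨N, hN⟩ := ha k
    refine ⟨N, fun n hn => ?_⟩
    simpa using (dvd_neg).mpr (hN n hn)

theorem uncountable_set_nat : Uncountable (Set ℕ) := by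
  rw [uncountable_iff_isEmpty_embedding]
  exact ⟨fun f => Function.cantor_injective f f.injective⟩

theorem finsupp_mem_tailDiv (p : ℕ) (y : ℕ →₀ ℤ) : (y : ℕ → ℤ) ∈ tailDiv p := by
  intro k
  refine ⟨y.support.sup id + 1, fun n hn => ?_⟩
  have hns : n ∉ y.support := by
    intro h
    have := Finset.le_sup (f := id) h
    simp only [id] at this
    omega
  rw [Finsupp.notMem_support_iff.mp hns]
  exact dvd_zero _

theorem tailDiv_uncountable (p : ℕ) (hp : p.Prime) : Uncountable (tailDiv p) := by
  classical
  have := uncountable_set_nat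
  have hpne : (p : ℤ) ^ 1 ≠ 0 := by
    simpa using fun h => hp.ne_zero (by exact_mod_cast h)
  refine Function.Injective.uncountable
    (f := fun s : Set ℕ =>
      (⟨fun n => (if n ∈ s then (1 : ℤ) else 0) * (p : ℤ) ^ n, ?_⟩ : tailDiv p)) ?_
  · intro k
    exact ⟨k, fun n hn => Dvd.dvd.mul_left (pow_dvd_pow _ hn) _⟩
  · intro s t hst
    ext n
    have h := congrFun (congrArg Subtype.val hst) n
    simp only at h
    have hne : ((p : ℤ) ^ n) ≠ 0 := pow_ne_zero _ (by exact_mod_cast hp.ne_zero)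
    have h2 := mul_right_cancel₀ hne h
    split_ifs at h2 with h3 h4 h4 <;> simp_all

/-- for a prime `p`, the subgroup of `ℤ^ω` of elements whose tails are
divisible by arbitrarily large powers of `p` is uncountable and is not a free abelian
group. -/
theorem statement14 (p : ℕ) (hp : p.Prime) :
    Uncountable (tailDiv p) ∧ ¬ Module.Free ℤ (tailDiv p) := by
  classical
  have huncount := tailDiv_uncountable p hp
  refine ⟨huncount, ?_⟩
  intro hfree
  set H := tailDiv p
  have hpz : (p : ℤ) ≠ 0 := by exact_mod_cast hp.ne_zero
  -- the submodule pH
  set pH : Submodule ℤ H :=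
    LinearMap.range ((p : ℤ) • (LinearMap.id : H →ₗ[ℤ] H)) with hpH
  -- the quotient H / pH is countable
  have hQ : Countable (H ⧸ pH) := by
    have hsurj : Function.Surjective
        (fun y : ℕ →₀ ℤ =>
          (Submodule.Quotient.mk (⟨(y : ℕ → ℤ), finsupp_mem_tailDiv p y⟩ : H) : H ⧸ pH)) := by
      intro q
      obtain ⟨x, rfl⟩ := Submodule.Quotient.mk_surjective pH q
      obtain ⟨N, hN⟩ := x.2 1
      refine ⟨Finsupp.onFinset (Finset.range N) (fun n => if n < N then x.1 n else 0)
        (by intro a h; simp only [Finset.mem_range]; by_contra hc; simp [hc] at h), ?_⟩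
      rw [Submodule.Quotient.eq]
      -- the witness z with p • z = y - x (as elements of H)
      have hzmem : (fun n => if n < N then 0 else x.1 n / p) ∈ tailDiv p := by
        intro k
        obtain ⟨N', hN'⟩ := x.2 (k + 1)
        refine ⟨max N N', fun n hn => ?_⟩
        have hn1 : ¬ n < N := by omega
        simp only [hn1, if_false]
        obtain ⟨c, hc⟩ := hN' n (le_trans (le_max_right _ _) hn)
        have : x.1 n = (p : ℤ) * ((p : ℤ) ^ k * c) := by rw [hc]; ring
        rw [this, Int.mul_ediv_cancel_left _ hpz]
        exact Dvd.intro c rfl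
      refine ⟨-(⟨_, hzmem⟩ : H), ?_⟩
      apply Subtype.ext
      funext n
      simp only [LinearMap.smul_apply, LinearMap.id_apply]
      show (p : ℤ) • (-(if n < N then 0 else x.1 n / p)) =
        (if n < N then x.1 n else 0) - x.1 n
      by_cases hn : n < N
      · simp [hn]
      · have hd := hN n (by omega)
        rw [pow_one] at hd
        simp only [hn, if_false, smul_eq_mul, mul_neg, zero_sub, neg_inj]
        exact Int.mul_ediv_cancel' hd
    exact hsurj.countable
  -- a basis injects into the quotient
  let b := Module.Free.chooseBasis ℤ H
  set ι := Module.Free.ChooseBasisIndex ℤ H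
  have hinj : Function.Injective
      (fun i : ι => (Submodule.Quotient.mk (b i) : H ⧸ pH)) := by
    intro i j hij
    by_contra hne
    rw [Submodule.Quotient.eq] at hij
    obtain ⟨z, hz⟩ := hij
    have hrepr := congrArg (fun w => (b.repr w) i) hz
    simp only [LinearMap.smul_apply, LinearMap.id_apply, map_smul, map_sub,
      Module.Basis.repr_self, Finsupp.smul_apply, Finsupp.sub_apply,
      Finsupp.single_apply, smul_eq_mul] at hrepr
    rw [if_pos trivial, if_neg (fun h => hne h.symm)] at hrepr
    have hdvd : (p : ℤ) ∣ 1 := ⟨b.repr z i, by omega⟩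
    have := Int.le_of_dvd one_pos hdvd
    have := hp.one_lt
    omega
  have hιc : Countable ι := hinj.countable
  have : Countable H := b.repr.toEquiv.countable_iff.mpr inferInstance
  exact (not_countable (α := H)) this
end

section
/- Let δ be the cofinality of the cardinal 2^ℵ₀. There exists a continuous increasing chain ⟨A_α : α < δ⟩ of subgroups of the Baer-Specker group ℤ^ω such that every A_α is slender and ⋃_{α<δ} A_α = ℤ^ω. -/
open Cardinal

/-- An abelian group `G` is slender if every homomorphism `ℤ^ω → G` kills all
functions vanishing below some `n`. -/
def Slender (G : Type*) [AddCommGroup G] : Prop :=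
  ∀ f : (ℕ → ℤ) →+ G, ∃ n : ℕ, ∀ x : ℕ → ℤ, (∀ i < n, x i = 0) → f x = 0

lemma mk_pi_int : #(ℕ → ℤ) = 2 ^ Cardinal.aleph0 := by
  rw [Cardinal.mk_arrow, Cardinal.mk_int, Cardinal.mk_nat]
  simp only [Cardinal.lift_id]
  exact Cardinal.power_self_eq le_rfl


lemma mk_addclosure_le {G : Type*} [AddCommGroup G] (S : Set G) :
    #(AddSubgroup.closure S) ≤ max #S ℵ₀ := by
  classical
  have hmem : ∀ l : List G, (∀ y ∈ l, y ∈ S ∪ -S) → l.sum ∈ AddSubgroup.closure S := by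
    intro l hl
    refine list_sum_mem fun y hy => ?_
    rcases hl y hy with h | h
    · exact AddSubgroup.subset_closure h
    · simpa using neg_mem (AddSubgroup.subset_closure (Set.mem_neg.mp h))
  set F : List (S ∪ -S : Set G) → AddSubgroup.closure S :=
    fun l => ⟨(l.map Subtype.val).sum, hmem _ (by
      intro y hy
      obtain ⟨z, hz, rfl⟩ := List.mem_map.mp hy
      exact z.2)⟩ with hF
  have hsur : Function.Surjective F := by
    rintro ⟨x, hx⟩
    have hx' : x ∈ AddSubmonoid.closure (S ∪ -S) := by
      rw [← AddSubgroup.closure_toAddSubmonoid]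
      exact hx
    obtain ⟨l, hl, hsum⟩ := AddSubmonoid.exists_list_of_mem_closure hx'
    refine ⟨l.attach.map (fun y => ⟨y.1, hl y.1 y.2⟩), ?_⟩
    apply Subtype.ext
    simp only [hF, List.map_map]
    simpa [List.attach_map_val] using hsum
  calc #(AddSubgroup.closure S) ≤ #(List (S ∪ -S : Set G)) := Cardinal.mk_le_of_surjective hsur
    _ ≤ max ℵ₀ #(S ∪ -S : Set G) := Cardinal.mk_list_le_max _
    _ ≤ max #S ℵ₀ := by
        have h1 : #(S ∪ -S : Set G) ≤ #S + #(-S : Set G) := Cardinal.mk_union_le _ _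
        have h2 : #(-S : Set G) = #S := by
          rw [← Set.image_neg_eq_neg]
          exact Cardinal.mk_image_eq neg_injective
        have h3 : #(S ∪ -S : Set G) ≤ max #S ℵ₀ := by
          refine le_trans h1 ?_
          rw [h2]
          calc #S + #S ≤ max #S ℵ₀ + max #S ℵ₀ :=
                add_le_add (le_max_left _ _) (le_max_left _ _)
            _ = max #S ℵ₀ := Cardinal.add_eq_self (le_max_right _ _)
        exact max_le (le_max_right _ _) h3

lemma mk_funs_bool : #(ℕ → Bool) = 2 ^ Cardinal.aleph0 := by
  rw [Cardinal.mk_arrow, Cardinal.mk_bool, Cardinal.mk_nat]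
  simp only [Cardinal.lift_id, Cardinal.lift_ofNat, Cardinal.lift_two]

lemma slender_of_small (G : AddSubgroup (ℕ → ℤ))
    (hG : #G < 2 ^ Cardinal.aleph0) : Slender G := by
  classical
  intro f
  by_contra hcon
  push_neg at hcon
  choose y hy0 hyf using hcon
  have hj' : ∀ k, ∃ j, ((f (y k) : ℕ → ℤ)) j ≠ 0 := by
    intro k
    by_contra hc
    push_neg at hc
    exact hyf k (by rw [← ZeroMemClass.coe_eq_zero]; exact funext hc)
  choose j hj using hj'
  set a : ℕ → ℤ := fun k => (f (y k) : ℕ → ℤ) (j k) with ha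
  set N : ℕ → ℤ := fun k => ((a k).natAbs : ℤ) + 1 with hN
  have hNpos : ∀ k, 0 < N k := fun k => by positivity
  set c : ℕ → ℤ := fun k => ∏ i ∈ Finset.range k, N i with hc
  have hcpos : ∀ k, 0 < c k := fun k => Finset.prod_pos fun i _ => hNpos i
  set x : (ℕ → Bool) → ℕ → ℤ :=
    fun ε i => ∑ k ∈ Finset.range (i + 1), (if ε k then c k else 0) * y k i with hx
  have hninj : ¬ Function.Injective fun ε : ℕ → Bool => f (x ε) := by
    intro hinj
    have h1 : #(ℕ → Bool) ≤ #G := Cardinal.mk_le_of_injective hinj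
    rw [mk_funs_bool] at h1
    exact absurd h1 (not_le.mpr hG)
  rw [Function.not_injective_iff] at hninj
  obtain ⟨ε, ε', hfeq, hne⟩ := hninj
  have hex : ∃ m, ε m ≠ ε' m := by
    by_contra hc2; push_neg at hc2; exact hne (funext hc2)
  set m := Nat.find hex with hm
  have hmne : ε m ≠ ε' m := Nat.find_spec hex
  have hmmin : ∀ k < m, ε k = ε' k := fun k hk => not_not.mp (Nat.find_min hex hk)
  set t : ℕ → ℤ := fun k => (if ε k then 1 else 0) - (if ε' k then 1 else 0) with ht
  have htm : t m = 1 ∨ t m = -1 := by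
    rcases hb1 : ε m <;> rcases hb2 : ε' m <;>
      simp only [ht, hb1, hb2, if_true, if_false] <;> simp_all
  have htmin : ∀ k < m, t k = 0 := fun k hk => by simp [ht, hmmin k hk]
  set r : ℕ → ℤ := fun k => ∏ i ∈ Finset.Ico (m + 1) k, N i with hr
  have hcr : ∀ k, m + 1 ≤ k → c k = c (m + 1) * r k := by
    intro k hk
    simp only [hc, hr]
    rw [Finset.range_eq_Ico, Finset.range_eq_Ico]
    exact (Finset.prod_Ico_consecutive N (Nat.zero_le (m + 1)) hk).symm
  set w : ℕ → ℤ := fun i => ∑ k ∈ Finset.Ico (m + 1) (i + 1), t k * r k * y k i with hw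
  have hkey : x ε - x ε' = (t m * c m) • y m + c (m + 1) • w := by
    funext i
    simp only [Pi.sub_apply, Pi.add_apply, Pi.smul_apply, smul_eq_mul, hx, hw]
    rw [← Finset.sum_sub_distrib]
    have hterm : ∀ k, (if ε k then c k else 0) * y k i - (if ε' k then c k else 0) * y k i
        = t k * c k * y k i := by
      intro k
      simp only [ht]
      cases hε : ε k <;> cases hε' : ε' k <;> simp <;> ring
    rw [Finset.sum_congr rfl fun k _ => hterm k]
    rcases lt_or_ge i m with him | him
    · have hz : ∀ k ∈ Finset.range (i + 1), t k * c k * y k i = 0 := by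
        intro k hk
        have hki : k < i + 1 := Finset.mem_range.mp hk
        rw [htmin k (by omega)]; ring
      rw [Finset.sum_eq_zero hz, hy0 m i him, Finset.Ico_eq_empty (by omega)]
      simp
    · rw [Finset.range_eq_Ico, ← Finset.sum_Ico_consecutive _ (Nat.zero_le m) (by omega : m ≤ i + 1)]
      rw [Finset.sum_eq_sum_Ico_succ_bot (by omega : m < i + 1)]
      rw [Finset.sum_eq_zero fun k hk => by
        rw [htmin k (Finset.mem_Ico.mp hk).2]; ring]
      rw [Finset.sum_congr rfl fun k hk => by
        rw [hcr k (Finset.mem_Ico.mp hk).1]]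
      rw [Finset.mul_sum, zero_add]
      congr 1
      exact Finset.sum_congr rfl fun k hk => by ring
  have h0 : (t m * c m) • f (y m) + c (m + 1) • f w = 0 := by
    have h1 : f (x ε - x ε') = 0 := by
      rw [map_sub, hfeq, sub_self]
    rw [hkey, map_add, map_zsmul, map_zsmul] at h1
    exact h1
  have h1 : t m * c m * a m + c (m + 1) * ((f w : ℕ → ℤ) (j m)) = 0 := by
    have h2 := congrArg (fun g : G => (g : ℕ → ℤ) (j m)) h0
    simpa using h2
  set b : ℤ := (f w : ℕ → ℤ) (j m) with hb
  have hcm : c (m + 1) = c m * N m := by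
    simp only [hc]; exact Finset.prod_range_succ N m
  have h2 : t m * a m + N m * b = 0 := by
    have h3 : c m * (t m * a m + N m * b) = 0 := by rw [hcm] at h1; ring_nf; ring_nf at h1; linarith
    exact (mul_eq_zero.mp h3).resolve_left (hcpos m).ne'
  have h4 : (a m).natAbs = ((a m).natAbs + 1) * b.natAbs := by
    have h5 : a m = -(N m * b) ∨ a m = N m * b := by
      rcases htm with h | h <;> rw [h] at h2
      · left; linarith
      · right; linarith
    have h6 : (a m).natAbs = (N m * b).natAbs := by
      rcases h5 with h | h
      · rw [h, Int.natAbs_neg]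
      · rw [h]
    rw [Int.natAbs_mul] at h6
    have h7 : (N m).natAbs = (a m).natAbs + 1 := by
      simp only [hN]
      rw [Int.natAbs_add_of_nonneg (by positivity) (by norm_num)]
      simp [Int.natAbs_abs]
    rw [h7] at h6
    exact h6
  have h8 : (a m).natAbs ≠ 0 := Int.natAbs_ne_zero.mpr (hj m)
  rcases Nat.eq_zero_or_pos b.natAbs with hb0 | hb0
  · rw [hb0, mul_zero] at h4; exact h8 h4
  · nlinarith [h4, hb0, Nat.pos_of_ne_zero h8]

/-- with `δ` the cofinality of `2^ℵ₀` (viewed as an ordinal), the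
Baer-Specker group `ℤ^ω` is the union of a continuous increasing chain
`⟨A_α : α < δ⟩` of slender subgroups. -/
theorem statement15 :
    ∃ A : Ordinal → AddSubgroup (ℕ → ℤ),
      (∀ α β : Ordinal, α ≤ β → β < (((2 : Cardinal) ^ Cardinal.aleph0).ord.cof).ord → A α ≤ A β) ∧
      (∀ ξ < (((2 : Cardinal) ^ Cardinal.aleph0).ord.cof).ord, Order.IsSuccLimit ξ →
        ((A ξ : Set (ℕ → ℤ)) = ⋃ ζ ∈ Set.Iio ξ, (A ζ : Set (ℕ → ℤ)))) ∧
      (∀ α < (((2 : Cardinal) ^ Cardinal.aleph0).ord.cof).ord, Slender (A α)) ∧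
      (⋃ α ∈ Set.Iio (((2 : Cardinal) ^ Cardinal.aleph0).ord.cof).ord, (A α : Set (ℕ → ℤ))) =
        Set.univ := by
  classical
  set κ := (2 : Cardinal) ^ Cardinal.aleph0 with hκ
  have hκℵ : Cardinal.aleph0 < κ := Cardinal.cantor _
  have hord : Order.IsSuccLimit κ.ord := Cardinal.isSuccLimit_ord hκℵ.le
  set δ : Ordinal := (κ.ord.cof).ord with hδ
  have hδlim : Order.IsSuccLimit δ := Cardinal.isSuccLimit_ord (Ordinal.aleph0_le_cof.mpr hord)
  obtain ⟨cseq, hcseq⟩ := Ordinal.exists_fundamental_sequence κ.ord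
  have hmkT : Nonempty ((ℕ → ℤ) ≃ κ.ord.ToType) := by
    rw [← Cardinal.lift_mk_eq', Cardinal.mk_toType, Cardinal.card_ord, mk_pi_int, hκ,
      Cardinal.lift_power, Cardinal.lift_power, Cardinal.lift_two, Cardinal.lift_two,
      Cardinal.lift_aleph0, Cardinal.lift_aleph0]
  obtain ⟨φ⟩ := hmkT
  set rank : (ℕ → ℤ) → Ordinal :=
    fun v => ((Ordinal.ToType.mk (o := κ.ord)).symm (φ v) : Set.Iio κ.ord).1 with hrank
  have hranklt : ∀ v, rank v < κ.ord :=
    fun v => ((Ordinal.ToType.mk (o := κ.ord)).symm (φ v)).2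
  have hrankinj : Function.Injective rank := by
    intro v v' h
    apply φ.injective
    apply (Ordinal.ToType.mk (o := κ.ord)).symm.injective
    exact Subtype.ext h
  set cc : Ordinal → Ordinal := fun ζ => if h : ζ < δ then cseq ζ h else 0 with hcc
  have hccmono : ∀ {ζ ζ' : Ordinal}, ζ ≤ ζ' → ζ' < δ → cc ζ ≤ cc ζ' := by
    intro ζ ζ' h hlt
    rcases eq_or_lt_of_le h with rfl | h
    · exact le_rfl
    · simp only [hcc, dif_pos hlt, dif_pos (h.trans hlt)]
      exact (hcseq.2.1 (h.trans hlt) hlt h).le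
  have hcclt : ∀ ζ, cc ζ < κ.ord := by
    intro ζ
    simp only [hcc]
    split
    · exact hcseq.lt _
    · exact hord.pos
  set S : Ordinal → Set (ℕ → ℤ) := fun ζ => {v | rank v ≤ cc ζ} with hS
  set C : Ordinal → AddSubgroup (ℕ → ℤ) := fun ζ => AddSubgroup.closure (S ζ) with hC
  set A : Ordinal → AddSubgroup (ℕ → ℤ) :=
    fun α => ⨆ ζ : {ζ : Ordinal // ζ < α}, C ζ.1 with hA
  have hAmono : ∀ {α β : Ordinal}, α ≤ β → A α ≤ A β := by
    intro α β h
    exact iSup_le fun ζ => le_iSup_of_le ⟨ζ.1, lt_of_lt_of_le ζ.2 h⟩ le_rfl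
  have hCA : ∀ ζ : Ordinal, C ζ ≤ A (Order.succ ζ) :=
    fun ζ => le_iSup_of_le ⟨ζ, Order.lt_succ ζ⟩ le_rfl
  refine ⟨A, fun α β h _ => hAmono h, ?_, ?_, ?_⟩
  · -- continuity
    intro ξ hξδ hξ
    have hdir : Directed (· ≤ ·) (fun ζ : {ζ : Ordinal // ζ < ξ} => C ζ.1) := by
      apply Monotone.directed_le
      intro ζ ζ' hle
      apply AddSubgroup.closure_mono
      intro v hv
      have hv' : rank v ≤ cc ζ.1 := hv
      exact le_trans hv' (hccmono hle (ζ'.2.trans hξδ))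
    have hne : Nonempty {ζ : Ordinal // ζ < ξ} := ⟨⟨0, hξ.pos⟩⟩
    ext v
    simp only [Set.mem_iUnion, SetLike.mem_coe, Set.mem_Iio]
    constructor
    · intro hv
      have hv' : v ∈ ⋃ ζ : {ζ : Ordinal // ζ < ξ}, (C ζ.1 : Set (ℕ → ℤ)) := by
        rw [← AddSubgroup.coe_iSup_of_directed hdir]
        exact hv
      obtain ⟨ζ, hvζ⟩ := Set.mem_iUnion.mp hv'
      exact ⟨Order.succ ζ.1, hξ.succ_lt ζ.2, hCA ζ.1 hvζ⟩
    · rintro ⟨β, hβ, hvβ⟩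
      exact hAmono hβ.le hvβ
  · -- slender
    intro α hα
    apply slender_of_small
    have hAeq : A α = AddSubgroup.closure (⋃ ζ : {ζ : Ordinal // ζ < α}, S ζ.1) := by
      rw [hA, AddSubgroup.closure_iUnion]
    set s : Ordinal := Ordinal.blsub α (fun ζ _ => cc ζ) with hs
    have hslt : s < κ.ord := by
      apply Ordinal.blsub_lt_ord
      · exact Cardinal.lt_ord.mp hα
      · exact fun i _ => hcclt i
    have hTsub : (⋃ ζ : {ζ : Ordinal // ζ < α}, S ζ.1) ⊆ {v | rank v < s} := by
      intro v hv
      obtain ⟨ζ, hvζ⟩ := Set.mem_iUnion.mp hv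
      have hvζ' : rank v ≤ cc ζ.1 := hvζ
      exact lt_of_le_of_lt hvζ' (Ordinal.lt_blsub (fun ζ _ => cc ζ) ζ.1 ζ.2)
    have hcard1 : Cardinal.lift #({v : ℕ → ℤ | rank v < s}) ≤ s.card := by
      have hemb : {v : ℕ → ℤ // rank v < s} ↪ s.ToType :=
        ⟨fun v => Ordinal.ToType.mk (o := s) ⟨rank v.1, v.2⟩, by
          intro v v' h
          have h2 : rank v.1 = rank v'.1 :=
            Subtype.mk_eq_mk.mp ((Ordinal.ToType.mk (o := s)).injective h)
          exact Subtype.ext (hrankinj h2)⟩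
      have h := Cardinal.lift_mk_le'.mpr ⟨hemb⟩
      rwa [Cardinal.mk_toType, Cardinal.lift_id'] at h
    have hT : Cardinal.lift #(⋃ ζ : {ζ : Ordinal // ζ < α}, S ζ.1) ≤ s.card :=
      le_trans (Cardinal.lift_le.mpr (Cardinal.mk_le_mk_of_subset hTsub)) hcard1
    have hle : #(A α) ≤ max #(⋃ ζ : {ζ : Ordinal // ζ < α}, S ζ.1) ℵ₀ := by
      rw [hAeq]; exact mk_addclosure_le _
    have hlift : Cardinal.lift #(A α) < κ := by
      refine lt_of_le_of_lt (Cardinal.lift_le.mpr hle) ?_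
      rw [Cardinal.lift_max, Cardinal.lift_aleph0]
      exact max_lt (lt_of_le_of_lt hT (Cardinal.lt_ord.mp hslt)) hκℵ
    have h2 : Cardinal.lift #(A α) < Cardinal.lift ((2 : Cardinal.{0}) ^ Cardinal.aleph0) := by
      rwa [Cardinal.lift_power, Cardinal.lift_two, Cardinal.lift_aleph0, ← hκ]
    exact Cardinal.lift_lt.mp h2
  · -- covering
    ext v
    simp only [Set.mem_iUnion, SetLike.mem_coe, Set.mem_Iio, Set.mem_univ, iff_true]
    have hlt : rank v < Ordinal.blsub δ cseq := by
      rw [hcseq.blsub_eq]; exact hranklt v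
    obtain ⟨ζ, hζ, hle⟩ := Ordinal.lt_blsub_iff.mp hlt
    refine ⟨Order.succ ζ, hδlim.succ_lt hζ, ?_⟩
    have hmem : v ∈ S ζ := by
      simp only [hS, hcc, Set.mem_setOf_eq, dif_pos hζ]
      exact hle
    exact hCA ζ (AddSubgroup.subset_closure hmem)
end
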